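/- arXiv:2505.00427 — 6 statements merged into one kernel-verified Lean document; each statement's English description precedes it below -/
import Mathlib

section
/- Optimality of covariant decoders (Lemma 3). Let G be a compact topological group with continuous unitary representations u_L on a finite type L and u_{P'} on a finite type P'. Let Ẽ : L → P' be a G-covariant quantum channel (the composition of a G-covariant encoder and G-covariant noise), and let ε : ℝ. If there exists a quantum channel R : P' → L such that for every unit vector ψ on L, (star ψ ⬝ᵥ (R (Ẽ (Matrix.vecMulVec ψ (star ψ)))).mulVec ψ).re ≥ 1 − ε, then there exists a G-covariant quantum channel R' : P' → L (covariant with respect to u_{P'} and u_L) satisfying the same bound: for every unit vector ψ on L, (star ψ ⬝ᵥ (R' (Ẽ (Matrix.vecMulVec ψ (star ψ)))).mulVec ψ).re ≥ 1 − ε. -/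
open scoped Kronecker ComplexOrder
open Matrix MeasureTheory

noncomputable section

/-- Choi matrix of a linear map on matrices. -/
def choiMatrix {A B : Type*} [Fintype A] [DecidableEq A] [Fintype B]
    (E : Matrix A A ℂ →ₗ[ℂ] Matrix B B ℂ) : Matrix (A × B) (A × B) ℂ :=
  ∑ i, ∑ j, (Matrix.single i j (1 : ℂ)) ⊗ₖ E (Matrix.single i j 1)

/-- A linear map is a quantum channel if it is trace-preserving and its Choi matrix is PSD. -/
def IsQuantumChannel {A B : Type*} [Fintype A] [DecidableEq A] [Fintype B]
    (E : Matrix A A ℂ →ₗ[ℂ] Matrix B B ℂ) : Prop :=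
  (∀ X, (E X).trace = X.trace) ∧ (choiMatrix E).PosSemidef

/-- A state: positive semidefinite with unit trace. -/
def IsState {S : Type*} [Fintype S] (ρ : Matrix S S ℂ) : Prop := ρ.PosSemidef ∧ ρ.trace = 1

/-- A unit vector. -/
def IsUnitVector {S : Type*} [Fintype S] (ψ : S → ℂ) : Prop := ∑ s, ‖ψ s‖ ^ 2 = 1

/-- The pure state (rank-one projector) of a vector. -/
def pureState {S : Type*} (ψ : S → ℂ) : Matrix S S ℂ := Matrix.vecMulVec ψ (star ψ)

/-- `G`-covariance of a channel with respect to unitary representations `u`, `v`. -/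
def IsCovariant {G A B : Type*} [Group G] [Fintype A] [DecidableEq A]
    [Fintype B] [DecidableEq B]
    (u : G →* Matrix.unitaryGroup A ℂ) (v : G →* Matrix.unitaryGroup B ℂ)
    (E : Matrix A A ℂ →ₗ[ℂ] Matrix B B ℂ) : Prop :=
  ∀ (g : G) (X : Matrix A A ℂ),
    E ((u g : Matrix A A ℂ) * X * (u g : Matrix A A ℂ)ᴴ) =
      (v g : Matrix B B ℂ) * E X * (v g : Matrix B B ℂ)ᴴ

attribute [local instance] Matrix.normedAddCommGroup Matrix.normedSpace

/-- The continuous enorm of the elementwise sup norm on matrices. -/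
def matContENorm {m n : Type*} [Fintype m] [Fintype n] : ContinuousENorm (Matrix m n ℂ) :=
  SeminormedAddGroup.toContinuousENorm

attribute [local instance] matContENorm

namespace CovAux

variable {α : Type*} [MeasurableSpace α] {μ : Measure α}

/-- Workhorse: finite-dimensional linear maps commute with Bochner integrals. -/
lemma lm_integral_comm {E F : Type*} [NormedAddCommGroup E] [NormedSpace ℂ E]
    [FiniteDimensional ℂ E] [NormedAddCommGroup F] [NormedSpace ℂ F] [CompleteSpace F]
    (T : E →ₗ[ℂ] F) {f : α → E} (hf : Integrable f μ) :
    T (∫ a, f a ∂μ) = ∫ a, T (f a) ∂μ :=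
  ((LinearMap.toContinuousLinearMap T).integral_comp_comm hf).symm

lemma integrable_of_continuous {G : Type*} [TopologicalSpace G] [MeasurableSpace G]
    [OpensMeasurableSpace G] [CompactSpace G] (μ : Measure G) [IsFiniteMeasureOnCompacts μ]
    {E : Type*} [NormedAddCommGroup E] {f : G → E} (hf : Continuous f) :
    Integrable f μ :=
  hf.integrable_of_hasCompactSupport (HasCompactSupport.of_compactSpace f)

/-- Entry evaluation as a linear map. -/
def entryLM {m n : Type*} (i : m) (j : n) : Matrix m n ℂ →ₗ[ℂ] ℂ where
  toFun M := M i j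
  map_add' _ _ := rfl
  map_smul' _ _ := rfl

lemma integral_entry {m n : Type*} [Fintype m] [Fintype n] {f : α → Matrix m n ℂ}
    (hf : Integrable f μ) (i : m) (j : n) :
    (∫ a, f a ∂μ) i j = ∫ a, f a i j ∂μ :=
  lm_integral_comm (entryLM i j) hf

/-- The quadratic form `M ↦ star x ⬝ᵥ M *ᵥ x` as a linear map. -/
def quadLM {n : Type*} [Fintype n] (x : n → ℂ) : Matrix n n ℂ →ₗ[ℂ] ℂ where
  toFun M := star x ⬝ᵥ M.mulVec x
  map_add' A B := by simp [Matrix.add_mulVec, dotProduct_add]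
  map_smul' c A := by simp [Matrix.smul_mulVec, dotProduct_smul]

@[simp] lemma quadLM_apply {n : Type*} [Fintype n] (x : n → ℂ) (M : Matrix n n ℂ) :
    quadLM x M = star x ⬝ᵥ M.mulVec x := rfl

/-- Conjugation `X ↦ U * X * Uᴴ` as a linear map. -/
def conjBy {n : Type*} [Fintype n] (U : Matrix n n ℂ) : Matrix n n ℂ →ₗ[ℂ] Matrix n n ℂ where
  toFun X := U * X * Uᴴ
  map_add' A B := by noncomm_ring
  map_smul' c A := by simp [Matrix.mul_smul, Matrix.smul_mul]

@[simp] lemma conjBy_apply {n : Type*} [Fintype n] (U X : Matrix n n ℂ) :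
    conjBy U X = U * X * Uᴴ := rfl

lemma posSemidef_integral {n : Type*} [Fintype n] {f : α → Matrix n n ℂ}
    (hf : Integrable f μ) (h : ∀ a, (f a).PosSemidef) :
    (∫ a, f a ∂μ).PosSemidef := by
  refine PosSemidef.of_dotProduct_mulVec_nonneg ?_ ?_
  · ext i j
    rw [Matrix.conjTranspose_apply, integral_entry hf, integral_entry hf i j,
      RCLike.star_def, ← integral_conj]
    exact integral_congr_ae (Filter.Eventually.of_forall fun a => by
      have := congrFun (congrFun (h a).1.eq i) j
      rw [Matrix.conjTranspose_apply] at this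
      simpa using this)
  · intro x
    have hq : Integrable (fun a => quadLM x (f a)) μ :=
      ((LinearMap.toContinuousLinearMap (quadLM (n := n) x)).integrable_comp hf)
    have : star x ⬝ᵥ (∫ a, f a ∂μ).mulVec x = ∫ a, quadLM x (f a) ∂μ :=
      lm_integral_comm (quadLM x) hf
    rw [this]
    rw [Complex.le_def]
    constructor
    · rw [Complex.zero_re, ← RCLike.re_to_complex, ← integral_re hq]
      exact integral_nonneg fun a => by simpa using (Complex.le_def.mp ((h a).dotProduct_mulVec_nonneg x)).1
    · rw [Complex.zero_im, ← RCLike.im_to_complex, ← integral_im hq]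
      refine (integral_eq_zero_of_ae (Filter.Eventually.of_forall fun a => ?_)).symm
      simpa using ((Complex.le_def.mp ((h a).dotProduct_mulVec_nonneg x)).2).symm

lemma choiMatrix_apply {A B : Type*} [Fintype A] [DecidableEq A] [Fintype B]
    (E : Matrix A A ℂ →ₗ[ℂ] Matrix B B ℂ) (i j : A) (a b : B) :
    choiMatrix E (i, a) (j, b) = E (Matrix.single i j 1) a b := by
  simp [choiMatrix, Matrix.sum_apply, Matrix.kroneckerMap_apply, Matrix.single,
    ite_and, Matrix.of_apply]

lemma mul_mul_conjT_apply {B : Type*} [Fintype B] (V M : Matrix B B ℂ) (a b : B) :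
    (V * M * Vᴴ) a b = ∑ c, ∑ d, V a c * M c d * star (V b d) := by
  simp only [Matrix.mul_apply, Matrix.conjTranspose_apply, Finset.sum_mul]
  rw [Finset.sum_comm]

lemma unitary_conj_std {A : Type*} [Fintype A] [DecidableEq A] (U : Matrix A A ℂ) (i j : A) :
    U * Matrix.single i j (1 : ℂ) * Uᴴ
      = ∑ k, ∑ l, (U k i * star (U l j)) • Matrix.single k l (1 : ℂ) := by
  conv_lhs => rw [Matrix.matrix_eq_sum_single (U * Matrix.single i j (1 : ℂ) * Uᴴ)]
  refine Finset.sum_congr rfl fun k _ => Finset.sum_congr rfl fun l _ => ?_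
  rw [Matrix.smul_single, smul_eq_mul, mul_one]
  rw [mul_mul_conjT_apply]
  simp [Matrix.single, ite_and, Matrix.of_apply]

lemma choiMatrix_conj {A B : Type*} [Fintype A] [DecidableEq A] [Fintype B] [DecidableEq B]
    (E : Matrix A A ℂ →ₗ[ℂ] Matrix B B ℂ) (U : Matrix A A ℂ) (V : Matrix B B ℂ) :
    choiMatrix (conjBy V ∘ₗ E ∘ₗ conjBy U)
      = (Uᵀ ⊗ₖ V) * choiMatrix E * (Uᵀ ⊗ₖ V)ᴴ := by
  ext ⟨i, a⟩ ⟨j, b⟩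
  rw [choiMatrix_apply]
  simp only [LinearMap.comp_apply, conjBy_apply]
  rw [mul_mul_conjT_apply, mul_mul_conjT_apply]
  simp only [Fintype.sum_prod_type]
  have hE : ∀ c d : B, E (U * Matrix.single i j 1 * Uᴴ) c d
      = ∑ k, ∑ l, U k i * star (U l j) * E (Matrix.single k l 1) c d := by
    intro c d
    rw [unitary_conj_std, map_sum, Matrix.sum_apply]
    refine Finset.sum_congr rfl fun k _ => ?_
    rw [map_sum, Matrix.sum_apply]
    refine Finset.sum_congr rfl fun l _ => ?_
    rw [LinearMap.map_smul, Matrix.smul_apply, smul_eq_mul]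
  simp only [hE, Finset.mul_sum, Finset.sum_mul]
  conv_lhs => enter [2, c]; rw [Finset.sum_comm]
  conv_lhs => rw [Finset.sum_comm]
  conv_lhs => enter [2, k, 2, c]; rw [Finset.sum_comm]
  refine Finset.sum_congr rfl fun k _ => Finset.sum_congr rfl fun c _ =>
    Finset.sum_congr rfl fun l _ => Finset.sum_congr rfl fun d _ => ?_
  simp only [Matrix.kroneckerMap_apply, choiMatrix_apply,
    Matrix.transpose_apply, star_mul']
  ring

section Unitary

variable {S : Type*} [Fintype S] [DecidableEq S]

lemma coe_inv_unitary (U : Matrix.unitaryGroup S ℂ) :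
    (↑(U⁻¹) : Matrix S S ℂ) = (↑U : Matrix S S ℂ)ᴴ := by
  rw [← Unitary.star_eq_inv, Unitary.coe_star, Matrix.star_eq_conjTranspose]

lemma trace_unitary_conj (U : Matrix.unitaryGroup S ℂ) (M : Matrix S S ℂ) :
    ((U : Matrix S S ℂ) * M * (U : Matrix S S ℂ)ᴴ).trace = M.trace := by
  rw [Matrix.trace_mul_cycle]
  have h : (U : Matrix S S ℂ)ᴴ * (U : Matrix S S ℂ) = 1 := by
    simpa [Matrix.star_eq_conjTranspose] using Unitary.coe_star_mul_self U
  rw [h, Matrix.one_mul]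

lemma conj_vecMulVec (U : Matrix S S ℂ) (ψ : S → ℂ) :
    U * Matrix.vecMulVec ψ (star ψ) * Uᴴ
      = Matrix.vecMulVec (U.mulVec ψ) (star (U.mulVec ψ)) := by
  ext i j
  rw [mul_mul_conjT_apply]
  simp only [Matrix.vecMulVec_apply, Matrix.mulVec, dotProduct, Pi.star_apply,
    star_sum, star_mul', Finset.sum_mul, Finset.mul_sum]
  rw [Finset.sum_comm]
  refine Finset.sum_congr rfl fun c _ => Finset.sum_congr rfl fun d _ => ?_
  ring

lemma sandwich_dot (U : Matrix S S ℂ) (M : Matrix S S ℂ) (ψ : S → ℂ) :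
    star ψ ⬝ᵥ (U * M * Uᴴ).mulVec ψ
      = star (Uᴴ.mulVec ψ) ⬝ᵥ M.mulVec (Uᴴ.mulVec ψ) := by
  rw [← Matrix.mulVec_mulVec, ← Matrix.mulVec_mulVec, Matrix.dotProduct_mulVec (star ψ) U,
    Matrix.star_mulVec, Matrix.conjTranspose_conjTranspose]

lemma isUnitVector_iff (ψ : S → ℂ) : IsUnitVector ψ ↔ star ψ ⬝ᵥ ψ = 1 := by
  have key : star ψ ⬝ᵥ ψ = ((∑ s, ‖ψ s‖ ^ 2 : ℝ) : ℂ) := by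
    push_cast
    refine Finset.sum_congr rfl fun s _ => ?_
    simp only [Pi.star_apply, RCLike.star_def]
    rw [mul_comm, Complex.mul_conj']
  rw [IsUnitVector, key]
  constructor
  · intro h; rw [h]; norm_num
  · intro h; exact_mod_cast h

lemma isUnitVector_conjT (U : Matrix.unitaryGroup S ℂ) {ψ : S → ℂ} (h : IsUnitVector ψ) :
    IsUnitVector ((U : Matrix S S ℂ)ᴴ.mulVec ψ) := by
  rw [isUnitVector_iff] at h ⊢
  rw [Matrix.star_mulVec, Matrix.conjTranspose_conjTranspose, ← Matrix.dotProduct_mulVec,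
    Matrix.mulVec_mulVec]
  have hU : (U : Matrix S S ℂ) * (U : Matrix S S ℂ)ᴴ = 1 := by
    simpa [Matrix.star_eq_conjTranspose] using Unitary.coe_mul_star_self U
  rw [hU, Matrix.one_mulVec, h]

end Unitary

end CovAux

/-- **Lemma 3 (Optimality of covariant decoders).**
If a decoder achieves worst-case fidelity `1 - ε` against a `G`-covariant
encoder-plus-noise channel, then some `G`-covariant decoder achieves the same bound. -/
theorem covariant_decoder_optimal
    {G : Type*} [Group G] [TopologicalSpace G] [IsTopologicalGroup G] [CompactSpace G]
    [MeasurableSpace G] [BorelSpace G]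
    {L P' : Type*} [Fintype L] [DecidableEq L] [Fintype P'] [DecidableEq P']
    (uL : G →* Matrix.unitaryGroup L ℂ) (uP' : G →* Matrix.unitaryGroup P' ℂ)
    (huL : Continuous fun g => (uL g : Matrix L L ℂ))
    (huP' : Continuous fun g => (uP' g : Matrix P' P' ℂ))
    (Et : Matrix L L ℂ →ₗ[ℂ] Matrix P' P' ℂ) (hEt : IsQuantumChannel Et)
    (hEtcov : IsCovariant uL uP' Et) (ε : ℝ)
    (R : Matrix P' P' ℂ →ₗ[ℂ] Matrix L L ℂ) (hR : IsQuantumChannel R)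
    (hRgood : ∀ ψ : L → ℂ, IsUnitVector ψ →
      (star ψ ⬝ᵥ (R (Et (pureState ψ))).mulVec ψ).re ≥ 1 - ε) :
    ∃ R' : Matrix P' P' ℂ →ₗ[ℂ] Matrix L L ℂ, IsQuantumChannel R' ∧
      IsCovariant uP' uL R' ∧
      ∀ ψ : L → ℂ, IsUnitVector ψ →
        (star ψ ⬝ᵥ (R' (Et (pureState ψ))).mulVec ψ).re ≥ 1 - ε := by
  classical
  open CovAux in
  -- the normalized Haar probability measure
  set μ : Measure G := Measure.haarMeasure (⊤ : TopologicalSpace.PositiveCompacts G) with hμdef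
  haveI : IsProbabilityMeasure μ := by
    constructor
    have := Measure.haarMeasure_self (K₀ := (⊤ : TopologicalSpace.PositiveCompacts G))
    rwa [TopologicalSpace.PositiveCompacts.coe_top] at this
  -- the twirled decoder family
  set F : G → (Matrix P' P' ℂ →ₗ[ℂ] Matrix L L ℂ) :=
    fun g => conjBy (uL g : Matrix L L ℂ) ∘ₗ R ∘ₗ conjBy (uP' g⁻¹ : Matrix P' P' ℂ) with hF
  have hFapp : ∀ g X, F g X = (uL g : Matrix L L ℂ) *
      R ((uP' g⁻¹ : Matrix P' P' ℂ) * X * (uP' g⁻¹ : Matrix P' P' ℂ)ᴴ) *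
      (uL g : Matrix L L ℂ)ᴴ := fun g X => rfl
  have hRc : Continuous R := R.continuous_of_finiteDimensional
  have hinv : Continuous fun g => (uP' g⁻¹ : Matrix P' P' ℂ) := huP'.comp continuous_inv
  have hcont : ∀ X, Continuous fun g => F g X := by
    intro X
    simp only [hFapp]
    exact (huL.matrix_mul (hRc.comp ((hinv.matrix_mul continuous_const).matrix_mul
      hinv.matrix_conjTranspose))).matrix_mul huL.matrix_conjTranspose
  have hFint : ∀ X, Integrable (fun g => F g X) μ :=
    fun X => integrable_of_continuous μ (hcont X)
  -- the averaged decoder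
  refine ⟨{ toFun := fun X => ∫ g, F g X ∂μ
            map_add' := fun X Y => by
              simp only [map_add]
              exact integral_add (hFint X) (hFint Y)
            map_smul' := fun c X => by
              simp only [LinearMap.map_smul, RingHom.id_apply]
              exact integral_smul c _ }, ⟨?_, ?_⟩, ?_, ?_⟩
  · -- trace preserving
    intro X
    show (∫ g, F g X ∂μ).trace = X.trace
    have h1 : (∫ g, F g X ∂μ).trace = ∫ g, (F g X).trace ∂μ :=
      lm_integral_comm (Matrix.traceLinearMap L ℂ ℂ) (hFint X)
    rw [h1]
    have h2 : ∀ g : G, (F g X).trace = X.trace := by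
      intro g
      rw [hFapp, trace_unitary_conj (uL g), hR.1, trace_unitary_conj (uP' g⁻¹)]
    simp only [h2]
    simp [measure_univ]
  · -- Choi matrix PSD
    have hchoic : Continuous fun g => choiMatrix (F g) := by
      apply continuous_matrix
      rintro ⟨i, a⟩ ⟨j, b⟩
      simp only [choiMatrix_apply]
      exact (hcont _).matrix_elem a b
    have hchoii : Integrable (fun g => choiMatrix (F g)) μ := integrable_of_continuous μ hchoic
    have hkey : choiMatrix
        ({ toFun := fun X => ∫ g, F g X ∂μ
           map_add' := fun X Y => by
              simp only [map_add]
              exact integral_add (hFint X) (hFint Y)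
           map_smul' := fun c X => by
              simp only [LinearMap.map_smul, RingHom.id_apply]
              exact integral_smul c _ } : Matrix P' P' ℂ →ₗ[ℂ] Matrix L L ℂ)
        = ∫ g, choiMatrix (F g) ∂μ := by
      ext ⟨i, a⟩ ⟨j, b⟩
      rw [choiMatrix_apply, integral_entry hchoii (i, a) (j, b)]
      show (∫ g, F g (Matrix.single i j 1) ∂μ) a b = _
      rw [integral_entry (hFint _) a b]
      exact integral_congr_ae (Filter.Eventually.of_forall fun g =>
        (choiMatrix_apply (F g) i j a b).symm)
    rw [hkey]
    refine posSemidef_integral hchoii fun g => ?_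
    rw [hF, choiMatrix_conj]
    exact hR.2.mul_mul_conjTranspose_same _
  · -- covariance
    intro h X
    show (∫ g, F g ((uP' h : Matrix P' P' ℂ) * X * (uP' h : Matrix P' P' ℂ)ᴴ) ∂μ)
      = (uL h : Matrix L L ℂ) * (∫ g, F g X ∂μ) * (uL h : Matrix L L ℂ)ᴴ
    have key : ∀ g, F g ((uP' h : Matrix P' P' ℂ) * X * (uP' h : Matrix P' P' ℂ)ᴴ)
        = (uL h : Matrix L L ℂ) * F (h⁻¹ * g) X * (uL h : Matrix L L ℂ)ᴴ := by
      intro g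
      rw [hFapp, hFapp]
      have e1 : (uL g : Matrix L L ℂ)
          = (uL h : Matrix L L ℂ) * (uL (h⁻¹ * g) : Matrix L L ℂ) := by
        have : uL g = uL h * uL (h⁻¹ * g) := by rw [← _root_.map_mul]; congr 1; group
        rw [this]; rfl
      have e2 : (uP' ((h⁻¹ * g)⁻¹) : Matrix P' P' ℂ)
          = (uP' g⁻¹ : Matrix P' P' ℂ) * (uP' h : Matrix P' P' ℂ) := by
        have : uP' ((h⁻¹ * g)⁻¹) = uP' g⁻¹ * uP' h := by rw [← _root_.map_mul]; congr 1; group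
        rw [this]; rfl
      rw [e2, e1]
      simp only [Matrix.conjTranspose_mul, Matrix.mul_assoc]
    calc (∫ g, F g ((uP' h : Matrix P' P' ℂ) * X * (uP' h : Matrix P' P' ℂ)ᴴ) ∂μ)
        = ∫ g, (uL h : Matrix L L ℂ) * F (h⁻¹ * g) X * (uL h : Matrix L L ℂ)ᴴ ∂μ := by
          exact integral_congr_ae (Filter.Eventually.of_forall key)
      _ = ∫ g, (uL h : Matrix L L ℂ) * F g X * (uL h : Matrix L L ℂ)ᴴ ∂μ :=
          integral_mul_left_eq_self
            (fun p => (uL h : Matrix L L ℂ) * F p X * (uL h : Matrix L L ℂ)ᴴ) h⁻¹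
      _ = (uL h : Matrix L L ℂ) * (∫ g, F g X ∂μ) * (uL h : Matrix L L ℂ)ᴴ :=
          (lm_integral_comm (conjBy (uL h : Matrix L L ℂ)) (hFint X)).symm
  · -- fidelity bound
    intro ψ hψ
    have hcoeinv : ∀ g : G, (uL g⁻¹ : Matrix L L ℂ) = (uL g : Matrix L L ℂ)ᴴ := by
      intro g; rw [map_inv]; exact coe_inv_unitary (uL g)
    have key : ∀ g, star ψ ⬝ᵥ (F g (Et (pureState ψ))).mulVec ψ
        = star ((uL g : Matrix L L ℂ)ᴴ.mulVec ψ) ⬝ᵥ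
            (R (Et (pureState ((uL g : Matrix L L ℂ)ᴴ.mulVec ψ)))).mulVec
            ((uL g : Matrix L L ℂ)ᴴ.mulVec ψ) := by
      intro g
      have harg : (uP' g⁻¹ : Matrix P' P' ℂ) * Et (pureState ψ) * (uP' g⁻¹ : Matrix P' P' ℂ)ᴴ
          = Et (pureState ((uL g : Matrix L L ℂ)ᴴ.mulVec ψ)) := by
        rw [← hEtcov g⁻¹ (pureState ψ), hcoeinv g]
        congr 1
        simp only [pureState]
        rw [conj_vecMulVec]
      rw [hFapp, sandwich_dot, harg]
    have hq : Integrable (fun g => quadLM ψ (F g (Et (pureState ψ)))) μ :=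
      (LinearMap.toContinuousLinearMap (quadLM ψ)).integrable_comp (hFint _)
    show (star ψ ⬝ᵥ (∫ g, F g (Et (pureState ψ)) ∂μ).mulVec ψ).re ≥ 1 - ε
    have hint : star ψ ⬝ᵥ (∫ g, F g (Et (pureState ψ)) ∂μ).mulVec ψ
        = ∫ g, quadLM ψ (F g (Et (pureState ψ))) ∂μ :=
      lm_integral_comm (quadLM ψ) (hFint _)
    rw [hint, ← RCLike.re_to_complex, ← integral_re hq]
    have hlow : ∀ g, 1 - ε ≤ RCLike.re (quadLM ψ (F g (Et (pureState ψ)))) := by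
      intro g
      have := hRgood ((uL g : Matrix L L ℂ)ᴴ.mulVec ψ) (isUnitVector_conjT (uL g) hψ)
      simp only [RCLike.re_to_complex, quadLM_apply, key g]
      exact this
    have : (1 - ε : ℝ) = ∫ _g, (1 - ε : ℝ) ∂μ := by simp [measure_univ]
    rw [ge_iff_le, this]
    exact integral_mono (integrable_const _) hq.re hlow

end
end

section
/- Single complete monotone for exact conversion to pure states in a convex resource theory (Proposition 3). Let A, B be finite types, let O_AB be a nonempty, convex, compact set of quantum channels A → B (compact in the finite-dimensional space of linear maps Matrix A A ℂ →ₗ[ℂ] Matrix B B ℂ), and let O_BB be a set of quantum channels B → B that contains the identity map and is such that F ∘ E ∈ O_AB whenever E ∈ O_AB and F ∈ O_BB. Let ρ be a state on A and ψ a unit vector on B. Then there exists E ∈ O_AB with E ρ = Matrix.vecMulVec ψ (star ψ) if and only if sSup {(star ψ ⬝ᵥ (E ρ).mulVec ψ).re | E ∈ O_AB} ≥ sSup {(star ψ ⬝ᵥ (F (Matrix.vecMulVec ψ (star ψ))).mulVec ψ).re | F ∈ O_BB}. -/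
open scoped Kronecker ComplexOrder
open Matrix MeasureTheory

noncomputable section

private lemma psd_eq_ct_mul {n : Type*} [Fintype n] {A : Matrix n n ℂ}
    (hA : A.PosSemidef) : ∃ B : Matrix n n ℂ, A = Bᴴ * B := by
  classical
  open scoped MatrixOrder in
  obtain ⟨B, hB⟩ := CStarAlgebra.nonneg_iff_eq_star_mul_self.mp hA.nonneg
  exact ⟨B, hB⟩

/-! ### Auxiliary lemmas -/

private lemma star_mul_self_eq (z : ℂ) : star z * z = (‖z‖ ^ 2 : ℝ) := by
  rw [mul_comm,
    show (star z : ℂ) = starRingEnd ℂ z from rfl, Complex.mul_conj, Complex.normSq_eq_norm_sq]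

private lemma unit_dot {B : Type*} [Fintype B] {ψ : B → ℂ} (hψ : IsUnitVector ψ) :
    star ψ ⬝ᵥ ψ = 1 := by
  have : star ψ ⬝ᵥ ψ = ((∑ s, ‖ψ s‖ ^ 2 : ℝ) : ℂ) := by
    rw [Complex.ofReal_sum]
    simp only [dotProduct, Pi.star_apply]
    exact Finset.sum_congr rfl fun s _ => star_mul_self_eq (ψ s)
  rw [this, hψ]; norm_num

private lemma pure_psd {B : Type*} [Fintype B] (ψ : B → ℂ) : (pureState ψ).PosSemidef := by
  refine Matrix.PosSemidef.of_dotProduct_mulVec_nonneg ?_ ?_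
  · ext i j
    simp [pureState, vecMulVec_apply, conjTranspose_apply, mul_comm]
  · intro x
    have : star x ⬝ᵥ (pureState ψ) *ᵥ x = star (star ψ ⬝ᵥ x) * (star ψ ⬝ᵥ x) := by
      simp only [pureState, dotProduct, mulVec, vecMulVec_apply, Pi.star_apply, Finset.mul_sum,
        Finset.sum_mul, star_sum, star_mul', star_star]
      rw [Finset.sum_comm]
      exact Finset.sum_congr rfl fun i _ => Finset.sum_congr rfl fun j _ => by ring
    rw [this, star_mul_self_eq]
    positivity

private lemma trace_pure {B : Type*} [Fintype B] {ψ : B → ℂ} (hψ : IsUnitVector ψ) :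
    (pureState ψ).trace = 1 := by
  have := unit_dot hψ
  simp only [dotProduct, Pi.star_apply] at this
  simp only [trace, diag, pureState, vecMulVec_apply, Pi.star_apply]
  rw [← this]
  exact Finset.sum_congr rfl fun s _ => mul_comm _ _

private lemma fid_pure {B : Type*} [Fintype B] {ψ : B → ℂ} (hψ : IsUnitVector ψ) :
    star ψ ⬝ᵥ (pureState ψ) *ᵥ ψ = 1 := by
  have hd := unit_dot hψ
  have : (pureState ψ) *ᵥ ψ = ψ := by
    ext b
    simp only [mulVec, dotProduct, pureState, vecMulVec_apply, Pi.star_apply]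
    calc ∑ d, ψ b * star (ψ d) * ψ d = ψ b * ∑ d, star (ψ d) * ψ d := by
          rw [Finset.mul_sum]; exact Finset.sum_congr rfl fun d _ => by ring
      _ = ψ b := by rw [show ∑ d, star (ψ d) * ψ d = star ψ ⬝ᵥ ψ from rfl, hd, mul_one]
  rw [this, hd]

private lemma choi_apply {A B : Type*} [Fintype A] [DecidableEq A] [Fintype B]
    (E : Matrix A A ℂ →ₗ[ℂ] Matrix B B ℂ) (a c : A) (b d : B) :
    choiMatrix E (a, b) (c, d) = E (Matrix.single a c 1) b d := by
  simp [choiMatrix, Matrix.sum_apply, Matrix.kroneckerMap_apply, Matrix.single,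
    Matrix.of_apply, ite_and]

private lemma lin_decomp {A : Type*} [Fintype A] [DecidableEq A] {V : Type*}
    [AddCommMonoid V] [Module ℂ V] (L : Matrix A A ℂ →ₗ[ℂ] V) (X : Matrix A A ℂ) :
    L X = ∑ a, ∑ c, X a c • L (Matrix.single a c 1) := by
  conv_lhs => rw [Matrix.matrix_eq_sum_single X]
  rw [map_sum]
  refine Finset.sum_congr rfl fun a _ => ?_
  rw [map_sum]
  refine Finset.sum_congr rfl fun c _ => ?_
  rw [show Matrix.single a c (X a c) = X a c • Matrix.single a c (1 : ℂ) by
    rw [Matrix.smul_single, smul_eq_mul, mul_one], LinearMap.map_smul]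

private lemma map_apply_eq {A B : Type*} [Fintype A] [DecidableEq A] [Fintype B]
    (E : Matrix A A ℂ →ₗ[ℂ] Matrix B B ℂ) (X : Matrix A A ℂ) (b d : B) :
    E X b d = ∑ a, ∑ c, X a c * E (Matrix.single a c 1) b d := by
  conv_lhs => rw [lin_decomp E X]
  simp [Matrix.sum_apply]

private lemma expand_quad {n : Type*} [Fintype n] (X : Matrix n n ℂ) (x : n → ℂ) :
    star x ⬝ᵥ X *ᵥ x = ∑ b, ∑ d, star (x b) * (X b d * x d) := by
  simp [dotProduct, mulVec, Finset.mul_sum]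

private lemma channel_psd {A B : Type*} [Fintype A] [DecidableEq A] [Fintype B] [DecidableEq B]
    {E : Matrix A A ℂ →ₗ[ℂ] Matrix B B ℂ} (hE : IsQuantumChannel E)
    {ρ : Matrix A A ℂ} (hρ : ρ.PosSemidef) : (E ρ).PosSemidef := by
  obtain ⟨M, hM⟩ := psd_eq_ct_mul hρ.transpose
  have hρ' : ∀ a c, ρ a c = ∑ k, star (M k c) * M k a := by
    intro a c
    have h := congrFun (congrFun hM c) a
    simpa [Matrix.mul_apply, Matrix.conjTranspose_apply, Matrix.transpose_apply] using h
  have hchoi := hE.2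
  refine Matrix.PosSemidef.of_dotProduct_mulVec_nonneg ?_ ?_
  · ext b d
    rw [Matrix.conjTranspose_apply, map_apply_eq E ρ d b, map_apply_eq E ρ b d]
    rw [star_sum]
    calc ∑ a, star (∑ c, ρ a c * E (Matrix.single a c 1) d b)
        = ∑ a, ∑ c, ρ c a * E (Matrix.single c a 1) b d := by
          refine Finset.sum_congr rfl fun a _ => ?_
          rw [star_sum]
          refine Finset.sum_congr rfl fun c _ => ?_
          rw [star_mul', hρ.1.apply c a]
          congr 1
          have h2 := hchoi.1.apply (c, b) (a, d)
          rw [choi_apply, choi_apply] at h2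
          exact h2
      _ = ∑ a, ∑ c, ρ a c * E (Matrix.single a c 1) b d := Finset.sum_comm
  · intro v
    set w : A → (A × B) → ℂ := fun k p => star (M k p.1) * v p.2 with hw
    set e : A → A → Matrix B B ℂ := fun a c => E (Matrix.single a c 1) with he
    have key : star v ⬝ᵥ (E ρ) *ᵥ v = ∑ k, star (w k) ⬝ᵥ choiMatrix E *ᵥ (w k) := by
      have step4 : ∀ k, star (w k) ⬝ᵥ choiMatrix E *ᵥ (w k)
          = ∑ a, ∑ c, (star (M k c) * M k a) * (star v ⬝ᵥ (e a c) *ᵥ v) := by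
        intro k
        rw [expand_quad]
        rw [Fintype.sum_prod_type]
        calc ∑ a, ∑ b, ∑ q : A × B, star (w k (a, b)) * (choiMatrix E (a, b) q * w k q)
            = ∑ a, ∑ b, ∑ c, ∑ d, (M k a * star (v b)) *
                (e a c b d * (star (M k c) * v d)) := by
              refine Finset.sum_congr rfl fun a _ => Finset.sum_congr rfl fun b _ => ?_
              rw [Fintype.sum_prod_type]
              refine Finset.sum_congr rfl fun c _ => Finset.sum_congr rfl fun d _ => ?_
              rw [choi_apply]
              simp only [hw, he, star_mul', star_star]
          _ = ∑ a, ∑ c, ∑ b, ∑ d, (M k a * star (v b)) *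
                (e a c b d * (star (M k c) * v d)) := by
              exact Finset.sum_congr rfl fun a _ => Finset.sum_comm
          _ = ∑ a, ∑ c, (star (M k c) * M k a) * (star v ⬝ᵥ (e a c) *ᵥ v) := by
              refine Finset.sum_congr rfl fun a _ => Finset.sum_congr rfl fun c _ => ?_
              rw [expand_quad, Finset.mul_sum]
              refine Finset.sum_congr rfl fun b _ => ?_
              rw [Finset.mul_sum]
              exact Finset.sum_congr rfl fun d _ => by ring
      have step1 : star v ⬝ᵥ (E ρ) *ᵥ v
          = ∑ a, ∑ c, ρ a c * (star v ⬝ᵥ (e a c) *ᵥ v) := by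
        rw [expand_quad]
        calc ∑ b, ∑ d, star (v b) * (E ρ b d * v d)
            = ∑ b, ∑ d, ∑ a, ∑ c, ρ a c * (star (v b) * (e a c b d * v d)) := by
              refine Finset.sum_congr rfl fun b _ => Finset.sum_congr rfl fun d _ => ?_
              rw [map_apply_eq E ρ b d]
              rw [Finset.sum_mul, Finset.mul_sum]
              refine Finset.sum_congr rfl fun a _ => ?_
              rw [Finset.sum_mul, Finset.mul_sum]
              exact Finset.sum_congr rfl fun c _ => by rw [he]; ring
          _ = ∑ b, ∑ a, ∑ d, ∑ c, ρ a c * (star (v b) * (e a c b d * v d)) :=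
              Finset.sum_congr rfl fun b _ => Finset.sum_comm
          _ = ∑ a, ∑ b, ∑ d, ∑ c, ρ a c * (star (v b) * (e a c b d * v d)) :=
              Finset.sum_comm
          _ = ∑ a, ∑ b, ∑ c, ∑ d, ρ a c * (star (v b) * (e a c b d * v d)) :=
              Finset.sum_congr rfl fun a _ => Finset.sum_congr rfl fun b _ => Finset.sum_comm
          _ = ∑ a, ∑ c, ∑ b, ∑ d, ρ a c * (star (v b) * (e a c b d * v d)) :=
              Finset.sum_congr rfl fun a _ => Finset.sum_comm
          _ = ∑ a, ∑ c, ρ a c * (star v ⬝ᵥ (e a c) *ᵥ v) := by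
              refine Finset.sum_congr rfl fun a _ => Finset.sum_congr rfl fun c _ => ?_
              rw [expand_quad]
              simp only [Finset.mul_sum]
      rw [step1]
      calc ∑ a, ∑ c, ρ a c * (star v ⬝ᵥ (e a c) *ᵥ v)
          = ∑ a, ∑ c, ∑ k, (star (M k c) * M k a) * (star v ⬝ᵥ (e a c) *ᵥ v) := by
            refine Finset.sum_congr rfl fun a _ => Finset.sum_congr rfl fun c _ => ?_
            rw [hρ' a c, Finset.sum_mul]
        _ = ∑ a, ∑ k, ∑ c, (star (M k c) * M k a) * (star v ⬝ᵥ (e a c) *ᵥ v) :=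
            Finset.sum_congr rfl fun a _ => Finset.sum_comm
        _ = ∑ k, ∑ a, ∑ c, (star (M k c) * M k a) * (star v ⬝ᵥ (e a c) *ᵥ v) :=
            Finset.sum_comm
        _ = ∑ k, star (w k) ⬝ᵥ choiMatrix E *ᵥ (w k) :=
            Finset.sum_congr rfl fun k _ => (step4 k).symm
    rw [key]
    exact Finset.sum_nonneg fun k _ => hchoi.dotProduct_mulVec_nonneg (w k)

private lemma quad_eq_sum_sq {B : Type*} [Fintype B] (N : Matrix B B ℂ) (ψ : B → ℂ) :
    star ψ ⬝ᵥ (Nᴴ * N) *ᵥ ψ = ∑ i, star ((N *ᵥ ψ) i) * ((N *ᵥ ψ) i) := by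
  rw [← Matrix.mulVec_mulVec, Matrix.dotProduct_mulVec, ← Matrix.star_mulVec]
  rfl

private lemma trace_expand {B : Type*} [Fintype B] (N : Matrix B B ℂ) :
    (Nᴴ * N).trace = ∑ i, ∑ j, star (N i j) * N i j := by
  simp only [Matrix.trace, Matrix.diag, Matrix.mul_apply, Matrix.conjTranspose_apply]
  exact Finset.sum_comm

private lemma fid_le_one {B : Type*} [Fintype B] {σ : Matrix B B ℂ} (hσ : σ.PosSemidef)
    (htr : σ.trace = 1) {ψ : B → ℂ} (hψ : IsUnitVector ψ) :
    (star ψ ⬝ᵥ σ *ᵥ ψ).re ≤ 1 := by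
  obtain ⟨N, rfl⟩ := psd_eq_ct_mul hσ
  have h1 : star ψ ⬝ᵥ (Nᴴ * N) *ᵥ ψ = ((∑ i, ‖(N *ᵥ ψ) i‖ ^ 2 : ℝ) : ℂ) := by
    rw [quad_eq_sum_sq, Complex.ofReal_sum]
    exact Finset.sum_congr rfl fun i _ => star_mul_self_eq _
  have h2 : (∑ i, ∑ j, ‖N i j‖ ^ 2 : ℝ) = 1 := by
    have := trace_expand N
    rw [htr] at this
    have h3 : ((∑ i, ∑ j, ‖N i j‖ ^ 2 : ℝ) : ℂ) = 1 := by
      rw [Complex.ofReal_sum]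
      refine Eq.trans (Finset.sum_congr rfl fun i _ => ?_) this.symm
      rw [Complex.ofReal_sum]
      exact Finset.sum_congr rfl fun j _ => (star_mul_self_eq _).symm
    exact_mod_cast h3
  rw [h1, Complex.ofReal_re]
  calc ∑ i, ‖(N *ᵥ ψ) i‖ ^ 2 ≤ ∑ i, ∑ j, ‖N i j‖ ^ 2 := by
        refine Finset.sum_le_sum fun i _ => ?_
        have hn : ‖(N *ᵥ ψ) i‖ ≤ ∑ j, ‖N i j‖ * ‖ψ j‖ := by
          refine le_trans (norm_sum_le Finset.univ fun j => N i j * ψ j) ?_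
          exact le_of_eq (Finset.sum_congr rfl fun j _ => norm_mul _ _)
        have cs := Finset.sum_mul_sq_le_sq_mul_sq Finset.univ (fun j => ‖N i j‖) (fun j => ‖ψ j‖)
        rw [hψ, mul_one] at cs
        calc ‖(N *ᵥ ψ) i‖ ^ 2 ≤ (∑ j, ‖N i j‖ * ‖ψ j‖) ^ 2 :=
              pow_le_pow_left₀ (norm_nonneg _) hn 2
          _ ≤ ∑ j, ‖N i j‖ ^ 2 := cs
    _ = 1 := h2

private lemma fid_eq_one {B : Type*} [Fintype B] {σ : Matrix B B ℂ} (hσ : σ.PosSemidef)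
    (htr : σ.trace = 1) {ψ : B → ℂ} (hψ : IsUnitVector ψ)
    (hfid : star ψ ⬝ᵥ σ *ᵥ ψ = 1) : σ = pureState ψ := by
  obtain ⟨N, rfl⟩ := psd_eq_ct_mul hσ
  set u : B → ℂ := N *ᵥ ψ with hu_def
  have hu : ∑ i, star (u i) * u i = 1 := by rw [← quad_eq_sum_sq, hfid]
  have hψC : ∑ j, star (ψ j) * ψ j = 1 := by
    have : ((∑ s, ‖ψ s‖ ^ 2 : ℝ) : ℂ) = 1 := by rw [hψ]; norm_num
    rw [← this, Complex.ofReal_sum]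
    exact Finset.sum_congr rfl fun j _ => star_mul_self_eq _
  have htrC : ∑ i, ∑ j, star (N i j) * N i j = 1 := by rw [← trace_expand, htr]
  have hui : ∀ i, ∑ j, star (N i j) * star (ψ j) = star (u i) := by
    intro i
    rw [show star (u i) = star (∑ j, N i j * ψ j) from rfl, star_sum]
    exact Finset.sum_congr rfl fun j _ => (star_mul' (N i j) (ψ j)).symm
  have hui2 : ∀ i, ∑ j, ψ j * N i j = u i := by
    intro i
    rw [show u i = ∑ j, N i j * ψ j from rfl]
    exact Finset.sum_congr rfl fun j _ => mul_comm _ _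
  have hS : ∑ i, ∑ j, star (N i j - u i * star (ψ j)) * (N i j - u i * star (ψ j)) = 0 := by
    have expand : ∀ i j, star (N i j - u i * star (ψ j)) * (N i j - u i * star (ψ j))
        = star (N i j) * N i j - (star (N i j) * star (ψ j)) * u i
          - star (u i) * (ψ j * N i j) + (star (u i) * u i) * (star (ψ j) * ψ j) := by
      intro i j
      rw [star_sub, star_mul', star_star]
      ring
    simp only [expand, Finset.sum_add_distrib, Finset.sum_sub_distrib]
    have e2 : ∑ i, ∑ j, (star (N i j) * star (ψ j)) * u i = 1 := by
      rw [← hu]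
      refine Finset.sum_congr rfl fun i _ => ?_
      rw [← Finset.sum_mul, hui i]
    have e3 : ∑ i, ∑ j, star (u i) * (ψ j * N i j) = 1 := by
      rw [← hu]
      refine Finset.sum_congr rfl fun i _ => ?_
      rw [← Finset.mul_sum, hui2 i]
    have e4 : ∑ i, ∑ j, (star (u i) * u i) * (star (ψ j) * ψ j) = 1 := by
      have : ∑ i, ∑ j, (star (u i) * u i) * (star (ψ j) * ψ j)
          = (∑ i, star (u i) * u i) * (∑ j, star (ψ j) * ψ j) := by
        rw [Finset.sum_mul_sum]
      rw [this, hu, hψC, mul_one]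
    rw [htrC, e2, e3, e4]
    ring
  have hR : ∀ i j, N i j = u i * star (ψ j) := by
    have hreal : ∑ i, ∑ j, ‖N i j - u i * star (ψ j)‖ ^ 2 = 0 := by
      have : ((∑ i, ∑ j, ‖N i j - u i * star (ψ j)‖ ^ 2 : ℝ) : ℂ) = 0 := by
        rw [← hS, Complex.ofReal_sum]
        refine Finset.sum_congr rfl fun i _ => ?_
        rw [Complex.ofReal_sum]
        exact Finset.sum_congr rfl fun j _ => (star_mul_self_eq _).symm
      exact_mod_cast this
    intro i j
    have h1 := (Finset.sum_eq_zero_iff_of_nonneg (fun i _ =>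
      Finset.sum_nonneg fun j _ => sq_nonneg ‖N i j - u i * star (ψ j)‖)).mp hreal i
      (Finset.mem_univ i)
    have h2 := (Finset.sum_eq_zero_iff_of_nonneg (fun j _ =>
      sq_nonneg ‖N i j - u i * star (ψ j)‖)).mp h1 j (Finset.mem_univ j)
    have h3 := norm_eq_zero.mp ((pow_eq_zero_iff (by norm_num : (2:ℕ) ≠ 0)).mp h2)
    exact sub_eq_zero.mp h3
  ext j k
  simp only [Matrix.mul_apply, Matrix.conjTranspose_apply, pureState, Matrix.vecMulVec_apply,
    Pi.star_apply]
  calc ∑ i, star (N i j) * N i k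
      = ∑ i, (star (u i) * u i) * (ψ j * star (ψ k)) := by
        refine Finset.sum_congr rfl fun i _ => ?_
        rw [hR i j, hR i k, star_mul', star_star]
        ring
    _ = ψ j * star (ψ k) := by rw [← Finset.sum_mul, hu, one_mul]

/-- **Proposition 3 (Single complete monotone for exact conversion to pure states).**
In a closed convex resource theory, `ρ` converts exactly to the pure state of `ψ` by a
free operation iff the fidelity of distillation satisfies `F_ψ(ρ) ≥ F_ψ(ψ)`. -/
theorem single_monotone_exact_conversion
    {A B : Type*} [Fintype A] [DecidableEq A] [Fintype B] [DecidableEq B]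
    (OAB : Set (Matrix A A ℂ →ₗ[ℂ] Matrix B B ℂ))
    (hne : OAB.Nonempty) (hconv : Convex ℝ OAB)
    (hcpt : IsCompact (DFunLike.coe '' OAB : Set (Matrix A A ℂ → Matrix B B ℂ)))
    (hch : ∀ E ∈ OAB, IsQuantumChannel E)
    (OBB : Set (Matrix B B ℂ →ₗ[ℂ] Matrix B B ℂ))
    (hchB : ∀ F ∈ OBB, IsQuantumChannel F)
    (hid : LinearMap.id ∈ OBB)
    (hcomp : ∀ E ∈ OAB, ∀ F ∈ OBB, F ∘ₗ E ∈ OAB)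
    (ρ : Matrix A A ℂ) (hρ : IsState ρ) (ψ : B → ℂ) (hψ : IsUnitVector ψ) :
    (∃ E ∈ OAB, E ρ = pureState ψ) ↔
      sSup {r : ℝ | ∃ E ∈ OAB, r = (star ψ ⬝ᵥ (E ρ).mulVec ψ).re} ≥
        sSup {r : ℝ | ∃ F ∈ OBB, r = (star ψ ⬝ᵥ (F (pureState ψ)).mulVec ψ).re} := by
  obtain ⟨hρpsd, hρtr⟩ := hρ
  have hfidP : star ψ ⬝ᵥ (pureState ψ) *ᵥ ψ = 1 := fid_pure hψ
  have boundB : ∀ r ∈ {r : ℝ | ∃ F ∈ OBB, r = (star ψ ⬝ᵥ (F (pureState ψ)).mulVec ψ).re},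
      r ≤ 1 := by
    rintro r ⟨F, hF, rfl⟩
    have hFc := hchB F hF
    exact fid_le_one (channel_psd hFc (pure_psd ψ)) (by rw [hFc.1, trace_pure hψ]) hψ
  have mem1 : (1 : ℝ) ∈ {r : ℝ | ∃ F ∈ OBB, r = (star ψ ⬝ᵥ (F (pureState ψ)).mulVec ψ).re} :=
    ⟨LinearMap.id, hid, by rw [LinearMap.id_apply, show (pureState ψ).mulVec ψ
      = (pureState ψ) *ᵥ ψ from rfl]; rw [hfidP, Complex.one_re]⟩
  have hSBsup : sSup {r : ℝ | ∃ F ∈ OBB, r = (star ψ ⬝ᵥ (F (pureState ψ)).mulVec ψ).re} = 1 :=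
    le_antisymm (Real.sSup_le boundB one_pos.le)
      (le_csSup ⟨1, fun r hr => boundB r hr⟩ mem1)
  have boundA : ∀ r ∈ {r : ℝ | ∃ E ∈ OAB, r = (star ψ ⬝ᵥ (E ρ).mulVec ψ).re}, r ≤ 1 := by
    rintro r ⟨E, hE, rfl⟩
    have hEc := hch E hE
    exact fid_le_one (channel_psd hEc hρpsd) (by rw [hEc.1, hρtr]) hψ
  rw [ge_iff_le, hSBsup]
  constructor
  · rintro ⟨E, hE, hEρ⟩
    refine le_csSup ⟨1, fun r hr => boundA r hr⟩ ⟨E, hE, ?_⟩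
    rw [show (E ρ).mulVec ψ = (E ρ) *ᵥ ψ from rfl, hEρ, hfidP, Complex.one_re]
  · intro hge
    have hcont : Continuous fun g : Matrix A A ℂ → Matrix B B ℂ =>
        (star ψ ⬝ᵥ (g ρ) *ᵥ ψ).re := by
      have h2 : Continuous fun M : Matrix B B ℂ => star ψ ⬝ᵥ M *ᵥ ψ := by
        have hrfl : (fun M : Matrix B B ℂ => star ψ ⬝ᵥ M *ᵥ ψ)
            = fun M => ∑ b, star (ψ b) * ∑ d, M b d * ψ d := rfl
        rw [hrfl]
        refine continuous_finset_sum _ fun b _ => Continuous.mul continuous_const ?_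
        refine continuous_finset_sum _ fun d _ => Continuous.mul ?_ continuous_const
        exact continuous_id.matrix_elem b d
      exact Complex.continuous_re.comp (h2.comp (continuous_apply ρ))
    have hset : {r : ℝ | ∃ E ∈ OAB, r = (star ψ ⬝ᵥ (E ρ).mulVec ψ).re}
        = (fun g : Matrix A A ℂ → Matrix B B ℂ => (star ψ ⬝ᵥ (g ρ) *ᵥ ψ).re)
          '' (DFunLike.coe '' OAB) := by
      ext r
      constructor
      · rintro ⟨E, hE, rfl⟩
        exact ⟨⇑E, ⟨E, hE, rfl⟩, rfl⟩
      · rintro ⟨g, ⟨E, hE, rfl⟩, rfl⟩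
        exact ⟨E, hE, rfl⟩
    have hKc := hcpt.image hcont
    have hKne : ((fun g : Matrix A A ℂ → Matrix B B ℂ => (star ψ ⬝ᵥ (g ρ) *ᵥ ψ).re)
        '' (DFunLike.coe '' OAB)).Nonempty := ((hne.image _).image _)
    have hmem := hKc.sSup_mem hKne
    rw [← hset] at hmem
    obtain ⟨E, hE, hEr⟩ := hmem
    have h1 : (star ψ ⬝ᵥ (E ρ) *ᵥ ψ).re = 1 :=
      le_antisymm (boundA _ ⟨E, hE, rfl⟩) (by rw [← hEr]; exact hge)
    have h0 : 0 ≤ star ψ ⬝ᵥ (E ρ) *ᵥ ψ := (channel_psd (hch E hE) hρpsd).dotProduct_mulVec_nonneg ψ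
    have him : (star ψ ⬝ᵥ (E ρ) *ᵥ ψ).im = 0 := (Complex.nonneg_iff.mp h0).2.symm
    have hfid1 : star ψ ⬝ᵥ (E ρ) *ᵥ ψ = 1 := by
      apply Complex.ext
      · rw [h1, Complex.one_re]
      · rw [him, Complex.one_im]
    exact ⟨E, hE, fid_eq_one (channel_psd (hch E hE) hρpsd)
      (by rw [(hch E hE).1 ρ, hρtr]) hψ hfid1⟩

end
end

section
/- Partial trace of W-code codeword dyads (equation (D4)). Fix d ≥ 1 and n ≥ 1, and model n+1 physical subsystems as Fin (d+1) × (Fin n → Fin (d+1)). Let w_i^{(n+1)} and w_i^{(n)} be the W-code codewords on n+1 and n subsystems respectively, and let D : (Fin n → Fin (d+1)) → ℂ be D x := if (∀ b, x b = ⊤) then 1 else 0. Then for all i, j : Fin d, ptrA (Matrix.vecMulVec (w_i^{(n+1)}) (star (w_j^{(n+1)}))) = (if i = j then ((n+1 : ℂ))⁻¹ else 0) • Matrix.vecMulVec D (star D) + ((n : ℂ)/(n+1)) • Matrix.vecMulVec (w_i^{(n)}) (star (w_j^{(n)})), where ptrA is the partial trace over the first factor Fin (d+1). -/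
open scoped Kronecker ComplexOrder
open Matrix MeasureTheory

noncomputable section

/-- Partial trace over the first factor. -/
def ptrA {A B : Type*} [Fintype A] (M : Matrix (A × B) (A × B) ℂ) : Matrix B B ℂ :=
  Matrix.of fun b b' => ∑ a, M (a, b) (a, b')

/-- W-code codeword `w_i^{(n)}` on `n` physical subsystems of local dimension `d+1`. -/
def wVec (d n : ℕ) (i : Fin d) : (Fin n → Fin (d + 1)) → ℂ := fun x =>
  if ∃ a : Fin n, x a = Fin.castSucc i ∧ ∀ b, b ≠ a → x b = Fin.last d
    then ((1 / Real.sqrt n : ℝ) : ℂ) else 0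

/-- W-code codeword on `n+1` subsystems, modeled as `Fin (d+1) × (Fin n → Fin (d+1))`. -/
def wVecSucc (d n : ℕ) (i : Fin d) : (Fin (d + 1) × (Fin n → Fin (d + 1))) → ℂ := fun kx =>
  if (kx.1 = Fin.castSucc i ∧ ∀ b, kx.2 b = Fin.last d) ∨
      (kx.1 = Fin.last d ∧ ∃ a, kx.2 a = Fin.castSucc i ∧ ∀ b, b ≠ a → kx.2 b = Fin.last d)
    then ((1 / Real.sqrt (n + 1) : ℝ) : ℂ) else 0

/-- Indicator vector of the all-⊤ configuration. -/
def allTop (d n : ℕ) : (Fin n → Fin (d + 1)) → ℂ := fun x =>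
  if ∀ b, x b = Fin.last d then 1 else 0

/-- **Partial trace of W-code codeword dyads (equation (D4)).**
Tracing out one subsystem of an `(n+1)`-subsystem W-code dyad yields a mixture of the
all-⊤ dyad and the `n`-subsystem W-code dyad. -/
theorem wcode_ptr_dyad
    (d n : ℕ) (hd : 1 ≤ d) (hn : 1 ≤ n) (i j : Fin d) :
    ptrA (Matrix.vecMulVec (wVecSucc d n i) (star (wVecSucc d n j))) =
      (if i = j then ((n + 1 : ℂ))⁻¹ else 0) •
          Matrix.vecMulVec (allTop d n) (star (allTop d n)) +
        ((n : ℂ) / (n + 1)) • Matrix.vecMulVec (wVec d n i) (star (wVec d n j)) := by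
  have key : ∀ (x : Fin n → Fin (d+1)) (k : Fin d),
      (∀ b, x b = Fin.last d) →
      ¬ ∃ a, x a = Fin.castSucc k ∧ ∀ b, b ≠ a → x b = Fin.last d := by
    rintro x k hT ⟨a, ha, -⟩
    have := hT a
    rw [ha] at this
    exact (Fin.castSucc_lt_last k).ne this
  have hr1 : (1 / Real.sqrt (n+1)) * (1 / Real.sqrt (n+1)) = ((n:ℝ)+1)⁻¹ := by
    rw [div_mul_div_comm, one_mul, Real.mul_self_sqrt (by positivity), one_div]
  have hc1 : ((1 / Real.sqrt (n + 1) : ℝ) : ℂ) * ((1 / Real.sqrt (n + 1) : ℝ) : ℂ)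
      = ((n : ℂ) + 1)⁻¹ := by
    rw [← Complex.ofReal_mul, hr1]
    push_cast
    ring
  have hn0 : (n : ℝ) ≠ 0 := by positivity
  have hr2 : (1 / Real.sqrt n) * (1 / Real.sqrt n) = ((n:ℝ))⁻¹ := by
    rw [div_mul_div_comm, one_mul, Real.mul_self_sqrt (by positivity), one_div]
  have hc2 : ((n : ℂ) / (n + 1)) * (((1 / Real.sqrt n : ℝ) : ℂ) * ((1 / Real.sqrt n : ℝ) : ℂ))
      = ((n : ℂ) + 1)⁻¹ := by
    rw [← Complex.ofReal_mul, hr2]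
    have h1 : (n : ℂ) ≠ 0 := by exact_mod_cast Nat.cast_ne_zero.mpr (by omega)
    have h2 : (n : ℂ) + 1 ≠ 0 := by
      have := Nat.cast_add_one_ne_zero (R := ℂ) n
      push_cast at this ⊢
      exact this
    push_cast
    field_simp
  simp only [one_div] at hc1 hc2
  simp only [Complex.ofReal_inv] at hc1 hc2
  ext x x'
  simp only [ptrA, Matrix.of_apply, Matrix.vecMulVec_apply, Pi.star_apply,
    Matrix.add_apply, Matrix.smul_apply, smul_eq_mul, wVecSucc, wVec, allTop,
    apply_ite (starRingEnd ℂ), Complex.conj_ofReal, map_zero, RCLike.star_def]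
  by_cases hTx : ∀ b, x b = Fin.last d <;>
  by_cases hTx' : ∀ b, x' b = Fin.last d <;>
  by_cases hE : ∃ a, x a = Fin.castSucc i ∧ ∀ b, b ≠ a → x b = Fin.last d <;>
  by_cases hE' : ∃ a, x' a = Fin.castSucc j ∧ ∀ b, b ≠ a → x' b = Fin.last d <;>
  first
  | exact absurd hE (key x i hTx)
  | exact absurd hE' (key x' j hTx')
  | (simp [hTx, hTx', hE, hE', (Fin.castSucc_lt_last _).ne, (Fin.castSucc_lt_last _).ne',
       Fin.castSucc_inj, mul_ite, ite_mul, Finset.sum_ite_eq, Finset.sum_ite_eq',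
       hc1, hc2, apply_ite (fun z : ℂ => z * ((1 / Real.sqrt (n+1) : ℝ) : ℂ))]
     try split <;> simp_all [eq_comm])
end
end

section
/- Erasure of a W-code encoded pure state (equation (33)). Fix d ≥ 1, n ≥ 2 and 1 ≤ N_e < n, and set m := n − N_e. Model the physical space as (Fin N_e → Fin (d+1)) × (Fin m → Fin (d+1)). For any unit vector c : Fin d → ℂ let Ψ := ∑ i, c i • w_i^{(n)} be the encoded vector on n subsystems and Ψ' := ∑ i, c i • w_i^{(m)} the encoded vector on m subsystems, and let D : (Fin m → Fin (d+1)) → ℂ be D y := if (∀ b, y b = ⊤) then 1 else 0. Then ptrA (Matrix.vecMulVec Ψ (star Ψ)) = ((N_e : ℂ)/n) • Matrix.vecMulVec D (star D) + (1 − (N_e : ℂ)/n) • Matrix.vecMulVec Ψ' (star Ψ'), where ptrA is the partial trace over the first factor (the erased subsystems). -/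
open scoped Kronecker ComplexOrder
open Matrix MeasureTheory

noncomputable section

/-- W-code codeword on `Ne + m` subsystems, transported along `Fin (Ne + m) ≃ Fin Ne ⊕ Fin m`
to the split physical space. -/
def wSplit (d Ne m : ℕ) (i : Fin d) :
    ((Fin Ne → Fin (d + 1)) × (Fin m → Fin (d + 1))) → ℂ := fun x =>
  wVec d (Ne + m) i fun a => Sum.elim x.1 x.2 (finSumFinEquiv.symm a)

def ohInd (d k : ℕ) (i : Fin d) : (Fin k → Fin (d + 1)) → ℂ := fun x =>
  if ∃ a, x a = Fin.castSucc i ∧ ∀ b, b ≠ a → x b = Fin.last d then 1 else 0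

lemma conj_ohInd (d k : ℕ) (i : Fin d) (x : Fin k → Fin (d + 1)) :
    (starRingEnd ℂ) (ohInd d k i x) = ohInd d k i x := by
  unfold ohInd; split <;> simp

lemma conj_allTop (d k : ℕ) (x : Fin k → Fin (d + 1)) :
    (starRingEnd ℂ) (allTop d k x) = allTop d k x := by
  unfold allTop; split <;> simp

lemma ohInd_mul_allTop (d k : ℕ) (i : Fin d) (x : Fin k → Fin (d + 1)) :
    ohInd d k i x * allTop d k x = 0 := by
  unfold ohInd allTop
  split_ifs with h1 h2
  · obtain ⟨a, ha, -⟩ := h1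
    exact absurd (ha.symm.trans (h2 a)) (Fin.castSucc_lt_last i).ne
  all_goals ring

lemma card_oneHot (d k : ℕ) (i : Fin d) :
    (Finset.univ.filter fun x : Fin k → Fin (d + 1) =>
      ∃ a, x a = Fin.castSucc i ∧ ∀ b, b ≠ a → x b = Fin.last d).card = k := by
  classical
  have himg : (Finset.univ.filter fun x : Fin k → Fin (d + 1) =>
      ∃ a, x a = Fin.castSucc i ∧ ∀ b, b ≠ a → x b = Fin.last d)
      = Finset.univ.image
          (fun a : Fin k => fun b => if b = a then Fin.castSucc i else Fin.last d) := by
    ext x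
    simp only [Finset.mem_filter, Finset.mem_univ, true_and, Finset.mem_image]
    constructor
    · rintro ⟨a, ha, hb⟩
      refine ⟨a, ?_⟩
      funext b
      by_cases h : b = a
      · subst h; simp [ha]
      · simp [h, hb b h]
    · rintro ⟨a, rfl⟩
      exact ⟨a, by simp, fun b hb => by simp [hb]⟩
  rw [himg, Finset.card_image_of_injective _ ?_, Finset.card_univ, Fintype.card_fin]
  intro a a' h
  by_contra hne
  have := congrFun h a
  simp only [if_pos rfl, if_neg hne] at this
  exact (Fin.castSucc_lt_last i).ne this

lemma sum_ohInd_mul (d k : ℕ) (i j : Fin d) :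
    ∑ x : Fin k → Fin (d + 1), ohInd d k i x * ohInd d k j x
      = if i = j then (k : ℂ) else 0 := by
  classical
  rcases eq_or_ne i j with rfl | hij
  · rw [if_pos rfl]
    have h : ∀ x : Fin k → Fin (d + 1), ohInd d k i x * ohInd d k i x
        = if (∃ a, x a = Fin.castSucc i ∧ ∀ b, b ≠ a → x b = Fin.last d) then (1 : ℂ) else 0 := by
      intro x; unfold ohInd; split <;> simp
    rw [Finset.sum_congr rfl fun x _ => h x, Finset.sum_boole, card_oneHot]
  · rw [if_neg hij]
    refine Finset.sum_eq_zero fun x _ => ?_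
    unfold ohInd
    split_ifs with h1 h2
    · obtain ⟨a, ha, hb⟩ := h1
      obtain ⟨a', ha', hb'⟩ := h2
      rcases eq_or_ne a a' with rfl | hne
      · exact absurd (Fin.castSucc_injective _ (ha.symm.trans ha')) hij
      · exact absurd (ha.symm.trans (hb' a hne)) (Fin.castSucc_lt_last i).ne
    all_goals ring

lemma sum_allTop_sq (d k : ℕ) :
    ∑ x : Fin k → Fin (d + 1), allTop d k x * allTop d k x = 1 := by
  have h : ∀ x : Fin k → Fin (d + 1), allTop d k x * allTop d k x
      = if x = (fun _ => Fin.last d) then (1 : ℂ) else 0 := by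
    intro x
    unfold allTop
    by_cases h : ∀ b, x b = Fin.last d
    · rw [if_pos h, if_pos (funext h)]; ring
    · rw [if_neg h, if_neg (fun hx => h fun b => congrFun hx b)]; ring
  rw [Finset.sum_congr rfl fun x _ => h x]
  simp

lemma split_iff (d Ne m : ℕ) (i : Fin d) (x : Fin Ne → Fin (d + 1)) (y : Fin m → Fin (d + 1)) :
    (∃ a : Fin (Ne + m), Sum.elim x y (finSumFinEquiv.symm a) = Fin.castSucc i ∧
        ∀ b, b ≠ a → Sum.elim x y (finSumFinEquiv.symm b) = Fin.last d) ↔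
      ((∃ a, x a = Fin.castSucc i ∧ ∀ b, b ≠ a → x b = Fin.last d) ∧ ∀ b, y b = Fin.last d) ∨
        ((∀ b, x b = Fin.last d) ∧ ∃ a, y a = Fin.castSucc i ∧ ∀ b, b ≠ a → y b = Fin.last d) := by
  constructor
  · rintro ⟨a, ha, hrest⟩
    rcases hs : finSumFinEquiv.symm a with a0 | a0
    · left
      refine ⟨⟨a0, by rwa [hs] at ha, fun b hb => ?_⟩, fun b => ?_⟩
      · have hne : finSumFinEquiv (Sum.inl b) ≠ a := by
          intro h
          have h2 := congrArg finSumFinEquiv.symm h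
          rw [Equiv.symm_apply_apply, hs] at h2
          exact hb (Sum.inl.inj h2)
        have := hrest _ hne
        rwa [Equiv.symm_apply_apply] at this
      · have hne : finSumFinEquiv (Sum.inr b) ≠ a := by
          intro h
          have h2 := congrArg finSumFinEquiv.symm h
          rw [Equiv.symm_apply_apply, hs] at h2
          cases h2
        have := hrest _ hne
        rwa [Equiv.symm_apply_apply] at this
    · right
      refine ⟨fun b => ?_, ⟨a0, by rwa [hs] at ha, fun b hb => ?_⟩⟩
      · have hne : finSumFinEquiv (Sum.inl b) ≠ a := by
          intro h
          have h2 := congrArg finSumFinEquiv.symm h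
          rw [Equiv.symm_apply_apply, hs] at h2
          cases h2
        have := hrest _ hne
        rwa [Equiv.symm_apply_apply] at this
      · have hne : finSumFinEquiv (Sum.inr b) ≠ a := by
          intro h
          have h2 := congrArg finSumFinEquiv.symm h
          rw [Equiv.symm_apply_apply, hs] at h2
          exact hb (Sum.inr.inj h2)
        have := hrest _ hne
        rwa [Equiv.symm_apply_apply] at this
  · rintro (⟨⟨a0, ha0, hx⟩, hy⟩ | ⟨hx, a0, ha0, hy⟩)
    · refine ⟨finSumFinEquiv (Sum.inl a0), by rw [Equiv.symm_apply_apply]; exact ha0,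
        fun b hb => ?_⟩
      rcases hs : finSumFinEquiv.symm b with b0 | b0
      · have hne : b0 ≠ a0 := by
          rintro rfl
          apply hb
          have := congrArg finSumFinEquiv hs
          rw [Equiv.apply_symm_apply] at this
          exact this
        exact hx b0 hne
      · exact hy b0
    · refine ⟨finSumFinEquiv (Sum.inr a0), by rw [Equiv.symm_apply_apply]; exact ha0,
        fun b hb => ?_⟩
      rcases hs : finSumFinEquiv.symm b with b0 | b0
      · exact hx b0
      · have hne : b0 ≠ a0 := by
          rintro rfl
          apply hb
          have := congrArg finSumFinEquiv hs
          rw [Equiv.apply_symm_apply] at this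
          exact this
        exact hy b0 hne

lemma wSplit_eq (d Ne m : ℕ) (i : Fin d) (x : Fin Ne → Fin (d + 1)) (y : Fin m → Fin (d + 1)) :
    wSplit d Ne m i (x, y) =
      ((1 / Real.sqrt ((Ne + m : ℕ)) : ℝ) : ℂ) *
        (ohInd d Ne i x * allTop d m y + allTop d Ne x * ohInd d m i y) := by
  have hAC : ¬((∃ a, x a = Fin.castSucc i ∧ ∀ b, b ≠ a → x b = Fin.last d) ∧
      (∀ b, x b = Fin.last d)) := by
    rintro ⟨⟨a, ha, -⟩, h⟩
    exact (Fin.castSucc_lt_last i).ne (ha.symm.trans (h a))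
  have hBD : ¬((∀ b, y b = Fin.last d) ∧
      (∃ a, y a = Fin.castSucc i ∧ ∀ b, b ≠ a → y b = Fin.last d)) := by
    rintro ⟨h, ⟨a, ha, -⟩⟩
    exact (Fin.castSucc_lt_last i).ne (ha.symm.trans (h a))
  show (if (∃ a : Fin (Ne + m), Sum.elim x y (finSumFinEquiv.symm a) = Fin.castSucc i ∧
      ∀ b, b ≠ a → Sum.elim x y (finSumFinEquiv.symm b) = Fin.last d) then
      ((1 / Real.sqrt ((Ne + m : ℕ)) : ℝ) : ℂ) else 0) = _
  rw [if_congr (split_iff d Ne m i x y) rfl rfl]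
  by_cases hA : (∃ a, x a = Fin.castSucc i ∧ ∀ b, b ≠ a → x b = Fin.last d) <;>
  by_cases hC : (∀ b : Fin Ne, x b = Fin.last d) <;>
  by_cases hB : (∀ b : Fin m, y b = Fin.last d) <;>
  by_cases hD : (∃ a, y a = Fin.castSucc i ∧ ∀ b, b ≠ a → y b = Fin.last d) <;>
  first
  | (simp [ohInd, allTop, hA, hB, hC, hD, (Fin.castSucc_lt_last i).ne']; done)
  | exact absurd ⟨hA, hC⟩ hAC

lemma wVec_eq (d k : ℕ) (i : Fin d) (x : Fin k → Fin (d + 1)) :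
    wVec d k i x = ((1 / Real.sqrt (k : ℕ) : ℝ) : ℂ) * ohInd d k i x := by
  unfold wVec ohInd
  split <;> simp

lemma sum_UU (d k : ℕ) (c : Fin d → ℂ) :
    ∑ x : Fin k → Fin (d + 1),
        (∑ i, c i * ohInd d k i x) * (starRingEnd ℂ) (∑ i, c i * ohInd d k i x)
      = (k : ℂ) * ∑ i, c i * (starRingEnd ℂ) (c i) := by
  have h1 : ∀ x : Fin k → Fin (d + 1),
      (∑ i, c i * ohInd d k i x) * (starRingEnd ℂ) (∑ i, c i * ohInd d k i x)
        = ∑ i, ∑ j, (c i * (starRingEnd ℂ) (c j)) * (ohInd d k i x * ohInd d k j x) := by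
    intro x
    rw [_root_.map_sum, Finset.sum_mul]
    refine Finset.sum_congr rfl fun i _ => ?_
    rw [Finset.mul_sum]
    refine Finset.sum_congr rfl fun j _ => ?_
    rw [_root_.map_mul, conj_ohInd]
    ring
  rw [Finset.sum_congr rfl fun x _ => h1 x, Finset.sum_comm, Finset.mul_sum]
  refine Finset.sum_congr rfl fun i _ => ?_
  rw [Finset.sum_comm]
  have h2 : ∀ j, ∑ x : Fin k → Fin (d + 1),
      (c i * (starRingEnd ℂ) (c j)) * (ohInd d k i x * ohInd d k j x)
        = (c i * (starRingEnd ℂ) (c j)) * (if i = j then (k : ℂ) else 0) := fun j => by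
    rw [← Finset.mul_sum, sum_ohInd_mul]
  rw [Finset.sum_congr rfl fun j _ => h2 j]
  simp [mul_ite, Finset.sum_ite_eq]
  ring

lemma sum_UT (d k : ℕ) (c : Fin d → ℂ) :
    ∑ x : Fin k → Fin (d + 1), (∑ i, c i * ohInd d k i x) * allTop d k x = 0 := by
  refine Finset.sum_eq_zero fun x _ => ?_
  rw [Finset.sum_mul]
  refine Finset.sum_eq_zero fun i _ => ?_
  linear_combination c i * ohInd_mul_allTop d k i x

lemma sum_TU (d k : ℕ) (c : Fin d → ℂ) :
    ∑ x : Fin k → Fin (d + 1), allTop d k x * (starRingEnd ℂ) (∑ i, c i * ohInd d k i x) = 0 := by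
  refine Finset.sum_eq_zero fun x _ => ?_
  rw [_root_.map_sum, Finset.mul_sum]
  refine Finset.sum_eq_zero fun i _ => ?_
  rw [_root_.map_mul, conj_ohInd]
  linear_combination (starRingEnd ℂ) (c i) * ohInd_mul_allTop d k i x

/-- **Erasure of a W-code encoded pure state (equation (33)).**
Erasing the first `N_e` of `n` subsystems of a W-code encoded pure state leaves the
mixture `(N_e/n) |⊥⟩⟨⊥| + (1 - N_e/n) Ψ' Ψ'ᴴ`. -/
theorem wcode_erasure_of_encoded_state
    (d n Ne : ℕ) (hd : 1 ≤ d) (hn : 2 ≤ n) (hNe : 1 ≤ Ne) (hNen : Ne < n)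
    (c : Fin d → ℂ) (hc : IsUnitVector c) :
    ptrA (Matrix.vecMulVec (∑ i, c i • wSplit d Ne (n - Ne) i)
        (star (∑ i, c i • wSplit d Ne (n - Ne) i))) =
      ((Ne : ℂ) / n) • Matrix.vecMulVec (allTop d (n - Ne)) (star (allTop d (n - Ne))) +
        (1 - (Ne : ℂ) / n) • Matrix.vecMulVec (∑ i, c i • wVec d (n - Ne) i)
          (star (∑ i, c i • wVec d (n - Ne) i)) := by
  have hnn : Ne + (n - Ne) = n := by omega
  have hc' : ∑ i, c i * (starRingEnd ℂ) (c i) = 1 := by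
    have h1 : ∀ i, c i * (starRingEnd ℂ) (c i) = ((‖c i‖ ^ 2 : ℝ) : ℂ) := by
      intro i; rw [Complex.mul_conj']; push_cast; ring
    rw [Finset.sum_congr rfl fun i _ => h1 i, ← Complex.ofReal_sum]
    unfold IsUnitVector at hc
    rw [hc]; norm_num
  have hPsi : ∀ p : (Fin Ne → Fin (d + 1)) × (Fin (n - Ne) → Fin (d + 1)),
      (∑ i, c i • wSplit d Ne (n - Ne) i) p
        = ((1 / Real.sqrt ((Ne + (n - Ne) : ℕ)) : ℝ) : ℂ) *
          ((∑ i, c i * ohInd d Ne i p.1) * allTop d (n - Ne) p.2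
            + allTop d Ne p.1 * (∑ i, c i * ohInd d (n - Ne) i p.2)) := by
    intro p
    rw [Finset.sum_apply]
    simp only [Pi.smul_apply, smul_eq_mul]
    have h1 : ∀ i, c i * wSplit d Ne (n - Ne) i p
        = ((1 / Real.sqrt ((Ne + (n - Ne) : ℕ)) : ℝ) : ℂ) *
          ((c i * ohInd d Ne i p.1) * allTop d (n - Ne) p.2
            + allTop d Ne p.1 * (c i * ohInd d (n - Ne) i p.2)) := fun i => by
      rw [show p = (p.1, p.2) from rfl, wSplit_eq]; ring
    rw [Finset.sum_congr rfl fun i _ => h1 i, ← Finset.mul_sum, Finset.sum_add_distrib,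
      ← Finset.sum_mul, ← Finset.mul_sum]
  have hPsi' : ∀ z : Fin (n - Ne) → Fin (d + 1),
      (∑ i, c i • wVec d (n - Ne) i) z
        = ((1 / Real.sqrt ((n - Ne : ℕ)) : ℝ) : ℂ) * ∑ i, c i * ohInd d (n - Ne) i z := by
    intro z
    rw [Finset.sum_apply]
    simp only [Pi.smul_apply, smul_eq_mul]
    rw [Finset.mul_sum]
    refine Finset.sum_congr rfl fun i _ => ?_
    rw [wVec_eq]; ring
  ext y y'
  simp only [ptrA, Matrix.of_apply, Matrix.vecMulVec_apply, Pi.star_apply,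
    Matrix.add_apply, Matrix.smul_apply, smul_eq_mul, RCLike.star_def]
  rw [hPsi' y, hPsi' y']
  simp only [conj_allTop]
  simp only [hPsi]
  have expand : ∀ x : Fin Ne → Fin (d + 1),
      (((1 / Real.sqrt ((Ne + (n - Ne) : ℕ)) : ℝ) : ℂ) *
          ((∑ i, c i * ohInd d Ne i x) * allTop d (n - Ne) y
            + allTop d Ne x * (∑ i, c i * ohInd d (n - Ne) i y))) *
        (starRingEnd ℂ) (((1 / Real.sqrt ((Ne + (n - Ne) : ℕ)) : ℝ) : ℂ) *
          ((∑ i, c i * ohInd d Ne i x) * allTop d (n - Ne) y'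
            + allTop d Ne x * (∑ i, c i * ohInd d (n - Ne) i y')))
      = ((∑ i, c i * ohInd d Ne i x) * (starRingEnd ℂ) (∑ i, c i * ohInd d Ne i x)) *
          (((1 / Real.sqrt ((Ne + (n - Ne) : ℕ)) : ℝ) : ℂ) *
              ((1 / Real.sqrt ((Ne + (n - Ne) : ℕ)) : ℝ) : ℂ) *
            (allTop d (n - Ne) y * allTop d (n - Ne) y'))
        + ((∑ i, c i * ohInd d Ne i x) * allTop d Ne x) *
          (((1 / Real.sqrt ((Ne + (n - Ne) : ℕ)) : ℝ) : ℂ) *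
              ((1 / Real.sqrt ((Ne + (n - Ne) : ℕ)) : ℝ) : ℂ) *
            (allTop d (n - Ne) y * (starRingEnd ℂ) (∑ i, c i * ohInd d (n - Ne) i y')))
        + ((allTop d Ne x) * (starRingEnd ℂ) (∑ i, c i * ohInd d Ne i x)) *
          (((1 / Real.sqrt ((Ne + (n - Ne) : ℕ)) : ℝ) : ℂ) *
              ((1 / Real.sqrt ((Ne + (n - Ne) : ℕ)) : ℝ) : ℂ) *
            ((∑ i, c i * ohInd d (n - Ne) i y) * allTop d (n - Ne) y'))
        + (allTop d Ne x * allTop d Ne x) *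
          (((1 / Real.sqrt ((Ne + (n - Ne) : ℕ)) : ℝ) : ℂ) *
              ((1 / Real.sqrt ((Ne + (n - Ne) : ℕ)) : ℝ) : ℂ) *
            ((∑ i, c i * ohInd d (n - Ne) i y) *
              (starRingEnd ℂ) (∑ i, c i * ohInd d (n - Ne) i y'))) := by
    intro x
    simp only [_root_.map_mul, _root_.map_add, Complex.conj_ofReal, conj_allTop]
    ring
  rw [Finset.sum_congr rfl fun x _ => expand x]
  rw [Finset.sum_add_distrib, Finset.sum_add_distrib, Finset.sum_add_distrib,
    ← Finset.sum_mul, ← Finset.sum_mul, ← Finset.sum_mul, ← Finset.sum_mul,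
    sum_UU, sum_UT, sum_TU, sum_allTop_sq, hc']
  have hr2 : ((1 / Real.sqrt ((Ne + (n - Ne) : ℕ)) : ℝ) : ℂ) *
      ((1 / Real.sqrt ((Ne + (n - Ne) : ℕ)) : ℝ) : ℂ) = 1 / (n : ℂ) := by
    rw [hnn, ← Complex.ofReal_mul, div_mul_div_comm, one_mul,
      Real.mul_self_sqrt (by positivity)]
    push_cast
    ring
  have hrm2 : ((1 / Real.sqrt ((n - Ne : ℕ)) : ℝ) : ℂ) *
      ((1 / Real.sqrt ((n - Ne : ℕ)) : ℝ) : ℂ) = 1 / ((n - Ne : ℕ) : ℂ) := by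
    rw [← Complex.ofReal_mul, div_mul_div_comm, one_mul,
      Real.mul_self_sqrt (by positivity)]
    push_cast
    ring
  rw [hr2, _root_.map_mul, Complex.conj_ofReal]
  have hnC : (n : ℂ) ≠ 0 := Nat.cast_ne_zero.mpr (by omega)
  have hmC : ((n - Ne : ℕ) : ℂ) ≠ 0 := Nat.cast_ne_zero.mpr (by omega)
  have hsubC : ((n - Ne : ℕ) : ℂ) = (n : ℂ) - Ne := by
    rw [Nat.cast_sub hNen.le]
  have hfin : (1 - (Ne : ℂ) / n) *
      ((((1 / Real.sqrt ((n - Ne : ℕ)) : ℝ) : ℂ) * ∑ i, c i * ohInd d (n - Ne) i y) *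
        (((1 / Real.sqrt ((n - Ne : ℕ)) : ℝ) : ℂ) *
          (starRingEnd ℂ) (∑ i, c i * ohInd d (n - Ne) i y')))
      = (1 / (n : ℂ)) *
          ((∑ i, c i * ohInd d (n - Ne) i y) *
            (starRingEnd ℂ) (∑ i, c i * ohInd d (n - Ne) i y')) := by
    have h1 : ((((1 / Real.sqrt ((n - Ne : ℕ)) : ℝ) : ℂ) * ∑ i, c i * ohInd d (n - Ne) i y) *
        (((1 / Real.sqrt ((n - Ne : ℕ)) : ℝ) : ℂ) *
          (starRingEnd ℂ) (∑ i, c i * ohInd d (n - Ne) i y')))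
        = (((1 / Real.sqrt ((n - Ne : ℕ)) : ℝ) : ℂ) * ((1 / Real.sqrt ((n - Ne : ℕ)) : ℝ) : ℂ)) *
          ((∑ i, c i * ohInd d (n - Ne) i y) *
            (starRingEnd ℂ) (∑ i, c i * ohInd d (n - Ne) i y')) := by
      ring
    rw [h1, hrm2, hsubC]
    have hsub0 : (n : ℂ) - Ne ≠ 0 := hsubC ▸ hmC
    field_simp
  rw [hfin]
  field_simp
  ring
end
end

section
/- Explicit decoder achievability for the W-state code. Fix d ≥ 1, n ≥ 2 and 1 ≤ N_e < n, and set m := n − N_e. Model the physical space as (Fin N_e → Fin (d+1)) × (Fin m → Fin (d+1)). Then there exists a quantum channel D : (Fin m → Fin (d+1)) → Fin d such that for every unit vector c : Fin d → ℂ, writing Ψ := ∑ i, c i • w_i^{(n)} for the W-code encoding of c, one has (star c ⬝ᵥ (D (ptrA (Matrix.vecMulVec Ψ (star Ψ)))).mulVec c).re ≥ 1 − (N_e : ℝ)/n; that is, the W-state code on n subsystems is (N_e/n)-correctable under erasure of the first N_e subsystems with a single decoder. -/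
open scoped Kronecker ComplexOrder
open Matrix MeasureTheory

noncomputable section

/-! ### Auxiliary lemmas -/

lemma posSemidef_vecMulVec_star {S : Type*} [Fintype S] (v : S → ℂ) :
    (Matrix.vecMulVec v (star v)).PosSemidef := by
  refine Matrix.PosSemidef.of_dotProduct_mulVec_nonneg ?_ ?_
  · ext p q
    simp [conjTranspose_apply, vecMulVec_apply, mul_comm]
  · intro x
    have h : star x ⬝ᵥ (Matrix.vecMulVec v (star v)) *ᵥ x
        = star (star v ⬝ᵥ x) * (star v ⬝ᵥ x) := by
      simp only [dotProduct, mulVec, vecMulVec_apply, Pi.star_apply, star_sum, star_mul',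
        star_star, Finset.sum_mul, Finset.mul_sum]
      rw [Finset.sum_comm]
      exact Finset.sum_congr rfl fun p _ => Finset.sum_congr rfl fun q _ => by ring
    rw [h]
    exact star_mul_self_nonneg _

lemma posSemidef_kron {α β : Type*} [Fintype α] [Fintype β] [DecidableEq α] [DecidableEq β]
    {P : Matrix α α ℂ} {S : Matrix β β ℂ} (hP : P.PosSemidef) (hS : S.PosSemidef) :
    (P ⊗ₖ S).PosSemidef := by
  exact hP.kronecker hS

lemma psd_trace_nonneg {S : Type*} [Fintype S] [DecidableEq S] {M : Matrix S S ℂ}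
    (h : M.PosSemidef) : 0 ≤ M.trace := by
  refine Finset.sum_nonneg fun i _ => ?_
  have := h.dotProduct_mulVec_nonneg (Pi.single i 1)
  simpa [dotProduct, mulVec, Pi.single_apply, Finset.sum_ite_eq] using this

lemma choiMatrix_apply {A B : Type*} [Fintype A] [DecidableEq A] [Fintype B]
    (E : Matrix A A ℂ →ₗ[ℂ] Matrix B B ℂ) (a a' : A) (b b' : B) :
    choiMatrix E (a, b) (a', b') = E (Matrix.single a a' 1) b b' := by
  simp [choiMatrix, Matrix.sum_apply, kroneckerMap_apply, Matrix.single, ite_and,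
    Matrix.of_apply, ite_mul, zero_mul, Finset.sum_ite_eq, Finset.sum_ite_eq']

lemma ptrA_psd {A B : Type*} [Fintype A] [Fintype B] (Ψ : A × B → ℂ) :
    (ptrA (Matrix.vecMulVec Ψ (star Ψ))).PosSemidef := by
  classical
  have h : ptrA (Matrix.vecMulVec Ψ (star Ψ))
      = (Matrix.of fun (a : A) (x : B) => star (Ψ (a, x)))ᴴ
        * (Matrix.of fun (a : A) (x : B) => star (Ψ (a, x))) := by
    ext x x'
    simp [ptrA, Matrix.mul_apply, Matrix.conjTranspose_apply, Matrix.vecMulVec_apply]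
  rw [h]
  exact Matrix.posSemidef_conjTranspose_mul_self _

lemma ptrA_quadform {A B : Type*} [Fintype A] [Fintype B] (Ψ : A × B → ℂ) (u : B → ℂ) :
    star u ⬝ᵥ (ptrA (Matrix.vecMulVec Ψ (star Ψ))) *ᵥ u
      = ∑ a, (∑ x, star (u x) * Ψ (a, x)) * star (∑ x, star (u x) * Ψ (a, x)) := by
  classical
  simp only [dotProduct, mulVec, ptrA, Matrix.vecMulVec_apply, Matrix.of_apply,
    Pi.star_apply, star_sum, star_mul', star_star, Finset.mul_sum, Finset.sum_mul]
  rw [Finset.sum_congr rfl fun x _ => Finset.sum_comm]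
  rw [Finset.sum_comm]
  refine Finset.sum_congr rfl fun a _ => ?_
  rw [Finset.sum_comm]
  refine Finset.sum_congr rfl fun x1 _ => Finset.sum_congr rfl fun x _ => by ring

/-! ### W-vector combinatorics -/

def wPt (d m : ℕ) (i : Fin d) (a : Fin m) : Fin m → Fin (d + 1) :=
  Function.update (fun _ => Fin.last d) a (Fin.castSucc i)

lemma castSucc_ne_last' {d : ℕ} (i : Fin d) : Fin.castSucc i ≠ Fin.last d :=
  (Fin.castSucc_lt_last i).ne

lemma wPt_apply_self {d m : ℕ} (i : Fin d) (a : Fin m) : wPt d m i a a = Fin.castSucc i := by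
  simp [wPt]

lemma wPt_apply_ne {d m : ℕ} (i : Fin d) (a b : Fin m) (h : b ≠ a) :
    wPt d m i a b = Fin.last d := by
  simp [wPt, Function.update_of_ne h]

lemma wPt_inj {d m : ℕ} (i : Fin d) : Function.Injective (wPt d m i) := by
  intro a b h
  by_contra hab
  have h1 := congrFun h a
  rw [wPt_apply_self, wPt_apply_ne i b a hab] at h1
  exact castSucc_ne_last' i h1

lemma wProp_iff {d m : ℕ} (i : Fin d) (x : Fin m → Fin (d + 1)) :
    (∃ a : Fin m, x a = Fin.castSucc i ∧ ∀ b, b ≠ a → x b = Fin.last d)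
      ↔ ∃ a : Fin m, x = wPt d m i a := by
  constructor
  · rintro ⟨a, h1, h2⟩
    refine ⟨a, funext fun b => ?_⟩
    by_cases hb : b = a
    · subst hb; rw [h1, wPt_apply_self]
    · rw [h2 b hb, wPt_apply_ne i a b hb]
  · rintro ⟨a, rfl⟩
    exact ⟨a, wPt_apply_self i a, fun b hb => wPt_apply_ne i a b hb⟩

lemma wVec_eq_s17 {d m : ℕ} (i : Fin d) (x : Fin m → Fin (d + 1)) :
    wVec d m i x = if ∃ a : Fin m, x = wPt d m i a then ((1 / Real.sqrt m : ℝ) : ℂ) else 0 := by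
  rw [wVec]
  simp only [wProp_iff]

lemma star_wVec {d m : ℕ} (i : Fin d) (x : Fin m → Fin (d + 1)) :
    star (wVec d m i x) = wVec d m i x := by
  rw [wVec]; split_ifs <;> simp [Complex.star_def, Complex.conj_ofReal]

lemma sum_wVec_mul {d m : ℕ} (i : Fin d) (h : (Fin m → Fin (d + 1)) → ℂ) :
    ∑ x, wVec d m i x * h x = ((1 / Real.sqrt m : ℝ) : ℂ) * ∑ a, h (wPt d m i a) := by
  classical
  have h1 : ∀ x, wVec d m i x * h x
      = if ∃ a : Fin m, x = wPt d m i a then ((1 / Real.sqrt m : ℝ) : ℂ) * h x else 0 := by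
    intro x; rw [wVec_eq_s17]; split_ifs <;> simp
  simp_rw [h1]
  rw [Finset.sum_ite, Finset.sum_const_zero, add_zero]
  have h2 : Finset.univ.filter (fun x => ∃ a : Fin m, x = wPt d m i a)
      = Finset.univ.image (wPt d m i) := by
    ext y; simp [eq_comm]
  rw [h2, Finset.sum_image (fun a _ b _ hab => wPt_inj i hab), Finset.mul_sum]

lemma wVec_wPt {d m : ℕ} (i j : Fin d) (a : Fin m) :
    wVec d m j (wPt d m i a) = if i = j then ((1 / Real.sqrt m : ℝ) : ℂ) else 0 := by
  rw [wVec_eq_s17]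
  by_cases hij : i = j
  · subst hij; simp
  · rw [if_neg hij, if_neg]
    rintro ⟨b, hb⟩
    by_cases hab : a = b
    · subst hab
      have := congrFun hb a
      rw [wPt_apply_self, wPt_apply_self] at this
      exact hij (Fin.castSucc_injective _ this)
    · have := congrFun hb a
      rw [wPt_apply_self, wPt_apply_ne j b a hab] at this
      exact castSucc_ne_last' i this

lemma wVec_orthonormal {d m : ℕ} (hm : 1 ≤ m) (i j : Fin d) :
    ∑ x, wVec d m i x * wVec d m j x = if i = j then 1 else 0 := by
  rw [sum_wVec_mul]
  simp_rw [wVec_wPt]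
  have hs : Real.sqrt m ≠ 0 := by
    refine Real.sqrt_ne_zero'.mpr ?_
    exact_mod_cast Nat.pos_of_ne_zero (by omega)
  split_ifs with hij
  · rw [Finset.sum_const, Finset.card_univ, Fintype.card_fin]
    rw [nsmul_eq_mul]
    push_cast
    rw [← Complex.ofReal_natCast]
    norm_cast
    field_simp
    rw [Real.sq_sqrt (Nat.cast_nonneg _)]
  · simp

lemma wSplit_top {d Ne m : ℕ} (hm : 1 ≤ m) (j : Fin d) (x : Fin m → Fin (d + 1)) :
    wSplit d Ne m j ((fun _ => Fin.last d), x)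
      = ((Real.sqrt m / Real.sqrt (Ne + m) : ℝ) : ℂ) * wVec d m j x := by
  rw [wSplit, wVec, wVec]
  set y : Fin (Ne + m) → Fin (d + 1) :=
    fun a => Sum.elim (fun _ => (Fin.last d : Fin (d+1))) x (finSumFinEquiv.symm a) with hy
  have hyr : ∀ a' : Fin m, y (finSumFinEquiv (Sum.inr a')) = x a' := by
    intro a'; simp [hy]
  have hiff : (∃ a : Fin (Ne + m), y a = Fin.castSucc j ∧ ∀ b, b ≠ a → y b = Fin.last d)
      ↔ (∃ a : Fin m, x a = Fin.castSucc j ∧ ∀ b, b ≠ a → x b = Fin.last d) := by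
    constructor
    · rintro ⟨a, h1, h2⟩
      rcases h : finSumFinEquiv.symm a with c | a'
      · exfalso
        have : y a = Fin.last d := by simp [hy, h]
        rw [h1] at this; exact castSucc_ne_last' j this
      · have ha : a = finSumFinEquiv (Sum.inr a') := by
          rw [← h, Equiv.apply_symm_apply]
        refine ⟨a', ?_, ?_⟩
        · rw [← hyr a', ← ha, h1]
        · intro b' hb'
          have hne : finSumFinEquiv (Sum.inr b') ≠ a := by
            rw [ha]; intro hc
            exact hb' (Sum.inr_injective (finSumFinEquiv.injective hc))
          rw [← hyr b']
          exact h2 _ hne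
    · rintro ⟨a', h1, h2⟩
      refine ⟨finSumFinEquiv (Sum.inr a'), by rw [hyr, h1], ?_⟩
      intro b hb
      rcases h : finSumFinEquiv.symm b with c | b'
      · simp [hy, h]
      · have hbb : b = finSumFinEquiv (Sum.inr b') := by rw [← h, Equiv.apply_symm_apply]
        have : b' ≠ a' := by
          intro hc; subst hc; exact hb hbb
        rw [hbb, hyr]
        exact h2 _ this
  rw [if_congr hiff rfl rfl]
  split_ifs
  · rw [← Complex.ofReal_mul]
    congr 1
    have hs : Real.sqrt m ≠ 0 := by
      refine Real.sqrt_ne_zero'.mpr ?_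
      exact_mod_cast Nat.pos_of_ne_zero (by omega)
    push_cast
    field_simp
  · ring

/-! ### The decoder -/

def wA (d m : ℕ) : Matrix (Fin d) (Fin m → Fin (d + 1)) ℂ :=
  Matrix.of fun i x => wVec d m i x

def wQ (d m : ℕ) : Matrix (Fin m → Fin (d + 1)) (Fin m → Fin (d + 1)) ℂ :=
  (wA d m)ᴴ * wA d m

def wSigma (d : ℕ) (hd : 0 < d) : Matrix (Fin d) (Fin d) ℂ :=
  Matrix.vecMulVec (Pi.single (⟨0, hd⟩ : Fin d) 1) (star (Pi.single (⟨0, hd⟩ : Fin d) 1))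

def wD (d m : ℕ) (hd : 0 < d) :
    Matrix (Fin m → Fin (d + 1)) (Fin m → Fin (d + 1)) ℂ →ₗ[ℂ] Matrix (Fin d) (Fin d) ℂ where
  toFun := fun X => wA d m * X * (wA d m)ᴴ + (X.trace - (wQ d m * X).trace) • wSigma d hd
  map_add' := by
    intro X Y
    simp only [Matrix.mul_add, Matrix.add_mul, Matrix.trace_add]
    module
  map_smul' := by
    intro r X
    simp only [Matrix.mul_smul, Matrix.smul_mul, Matrix.trace_smul, smul_eq_mul,
      RingHom.id_apply]
    module

lemma wA_mul_conjTranspose {d m : ℕ} (hm : 1 ≤ m) : wA d m * (wA d m)ᴴ = 1 := by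
  ext i j
  simp only [Matrix.mul_apply, Matrix.conjTranspose_apply, wA, Matrix.of_apply, star_wVec,
    Matrix.one_apply]
  rw [← wVec_orthonormal hm i j]

lemma wQ_herm {d m : ℕ} : (wQ d m)ᴴ = wQ d m := by
  rw [wQ, Matrix.conjTranspose_mul, Matrix.conjTranspose_conjTranspose]

lemma wQ_proj {d m : ℕ} (hm : 1 ≤ m) : wQ d m * wQ d m = wQ d m := by
  rw [wQ, Matrix.mul_assoc, ← Matrix.mul_assoc (wA d m), wA_mul_conjTranspose hm,
    Matrix.one_mul]

lemma wR_herm {d m : ℕ} : (1 - wQ d m)ᴴ = 1 - wQ d m := by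
  rw [Matrix.conjTranspose_sub, Matrix.conjTranspose_one, wQ_herm]

lemma wR_proj {d m : ℕ} (hm : 1 ≤ m) : (1 - wQ d m) * (1 - wQ d m) = 1 - wQ d m := by
  simp only [Matrix.sub_mul, Matrix.mul_sub, Matrix.one_mul, Matrix.mul_one, wQ_proj hm]
  abel

lemma wR_psd {d m : ℕ} (hm : 1 ≤ m) : (1 - wQ d m).PosSemidef := by
  have h : 1 - wQ d m = (1 - wQ d m)ᴴ * (1 - wQ d m) := by
    rw [wR_herm, wR_proj hm]
  rw [h]
  exact Matrix.posSemidef_conjTranspose_mul_self _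

lemma wSigma_psd {d : ℕ} (hd : 0 < d) : (wSigma d hd).PosSemidef :=
  posSemidef_vecMulVec_star _

lemma wSigma_trace {d : ℕ} (hd : 0 < d) : (wSigma d hd).trace = 1 := by
  simp [wSigma, Matrix.trace, Matrix.diag, Matrix.vecMulVec_apply, Pi.single_apply,
    Finset.sum_ite_eq]

lemma wD_channel {d m : ℕ} (hd : 0 < d) (hm : 1 ≤ m) : IsQuantumChannel (wD d m hd) := by
  constructor
  · intro X
    show (wA d m * X * (wA d m)ᴴ + (X.trace - (wQ d m * X).trace) • wSigma d hd).trace = X.trace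
    rw [Matrix.trace_add, Matrix.trace_smul, wSigma_trace, Matrix.trace_mul_cycle]
    rw [show (wA d m)ᴴ * wA d m * X = wQ d m * X from rfl]
    simp
  · have hchoi : choiMatrix (wD d m hd)
        = Matrix.vecMulVec (fun p : (Fin m → Fin (d+1)) × Fin d => wA d m p.2 p.1)
            (star (fun p : (Fin m → Fin (d+1)) × Fin d => wA d m p.2 p.1))
          + ((1 - wQ d m)ᵀ ⊗ₖ wSigma d hd) := by
      ext ⟨a, b⟩ ⟨a', b'⟩
      rw [choiMatrix_apply]
      show (wA d m * Matrix.single a a' (1:ℂ) * (wA d m)ᴴ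
          + ((Matrix.single a a' (1:ℂ)).trace
            - (wQ d m * Matrix.single a a' (1:ℂ)).trace) • wSigma d hd) b b' = _
      have h1 : (wA d m * Matrix.single a a' (1:ℂ) * (wA d m)ᴴ) b b'
          = wA d m b a * star (wA d m b' a') := by
        simp [Matrix.mul_apply, Matrix.single, Matrix.conjTranspose_apply, ite_and,
          Finset.sum_ite_eq, Finset.sum_ite_eq', ite_mul, mul_ite, zero_mul, mul_zero]
      have h2 : (Matrix.single a a' (1:ℂ)).trace = if a' = a then (1:ℂ) else 0 := by
        simp [Matrix.trace, Matrix.diag, Matrix.single, ite_and, Finset.sum_ite_eq]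
      have h3 : (wQ d m * Matrix.single a a' (1:ℂ)).trace = wQ d m a' a := by
        simp [Matrix.trace, Matrix.diag, Matrix.mul_apply, Matrix.single, ite_and,
          mul_ite, mul_zero, mul_one, Finset.sum_ite_eq, Finset.sum_ite_eq']
      rw [Matrix.add_apply, Matrix.smul_apply, h1, h2, h3]
      simp only [Matrix.add_apply, Matrix.vecMulVec_apply, Pi.star_apply, kroneckerMap_apply,
        Matrix.transpose_apply, Matrix.sub_apply, Matrix.one_apply, smul_eq_mul]
    rw [hchoi]
    exact (posSemidef_vecMulVec_star _).add
      (posSemidef_kron ((wR_psd hm).transpose) (wSigma_psd hd))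

lemma sum_mul_sum_orth {d m : ℕ} (hm : 1 ≤ m) (a b : Fin d → ℂ) :
    ∑ x, (∑ i, a i * wVec d m i x) * (∑ j, b j * wVec d m j x) = ∑ i, a i * b i := by
  have h1 : ∀ x, (∑ i, a i * wVec d m i x) * (∑ j, b j * wVec d m j x)
      = ∑ i, ∑ j, a i * b j * (wVec d m i x * wVec d m j x) := by
    intro x
    rw [Finset.sum_mul_sum]
    exact Finset.sum_congr rfl fun i _ => Finset.sum_congr rfl fun j _ => by ring
  simp_rw [h1]
  rw [Finset.sum_comm]
  refine Finset.sum_congr rfl fun i _ => ?_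
  rw [Finset.sum_comm]
  have h2 : ∀ j, ∑ x, a i * b j * (wVec d m i x * wVec d m j x)
      = a i * b j * ∑ x, wVec d m i x * wVec d m j x := by
    intro j; rw [Finset.mul_sum]
  simp_rw [h2, wVec_orthonormal hm, mul_ite, mul_one, mul_zero]
  simp [Finset.sum_ite_eq]

/-- **Explicit decoder achievability for the W-state code.**
There is a single decoding channel recovering every W-code encoded pure state after
erasure of the first `N_e` subsystems with fidelity at least `1 - N_e/n`. -/
theorem wcode_explicit_decoder
    (d n Ne : ℕ) (hd : 1 ≤ d) (hn : 2 ≤ n) (hNe : 1 ≤ Ne) (hNen : Ne < n) :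
    ∃ D : Matrix (Fin (n - Ne) → Fin (d + 1)) (Fin (n - Ne) → Fin (d + 1)) ℂ →ₗ[ℂ]
        Matrix (Fin d) (Fin d) ℂ,
      IsQuantumChannel D ∧
      ∀ c : Fin d → ℂ, IsUnitVector c →
        (star c ⬝ᵥ (D (ptrA (Matrix.vecMulVec (∑ i, c i • wSplit d Ne (n - Ne) i)
          (star (∑ i, c i • wSplit d Ne (n - Ne) i))))).mulVec c).re ≥
          1 - (Ne : ℝ) / n := by
  have hd' : 0 < d := hd
  have hm : 1 ≤ n - Ne := by omega
  refine ⟨wD d (n - Ne) hd', wD_channel hd' hm, ?_⟩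
  intro c hc
  set m := n - Ne with hmdef
  set Ψ : (Fin Ne → Fin (d + 1)) × (Fin m → Fin (d + 1)) → ℂ :=
    ∑ i, c i • wSplit d Ne m i with hPsi
  set ρ := ptrA (Matrix.vecMulVec Ψ (star Ψ)) with hrho
  set u : (Fin m → Fin (d + 1)) → ℂ := (wA d m)ᴴ.mulVec c with hu
  set g : (Fin Ne → Fin (d + 1)) → ℂ := fun a => ∑ x, star (u x) * Ψ (a, x) with hg
  set tA : Fin Ne → Fin (d + 1) := fun _ => Fin.last d with htA
  -- split the decoder output
  have hsplit : star c ⬝ᵥ (wD d m hd' ρ).mulVec c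
      = star c ⬝ᵥ (wA d m * ρ * (wA d m)ᴴ).mulVec c
        + (ρ.trace - (wQ d m * ρ).trace) * (star c ⬝ᵥ (wSigma d hd').mulVec c) := by
    show star c ⬝ᵥ ((wA d m * ρ * (wA d m)ᴴ
        + (ρ.trace - (wQ d m * ρ).trace) • wSigma d hd').mulVec c) = _
    rw [Matrix.add_mulVec, dotProduct_add, Matrix.smul_mulVec, dotProduct_smul,
      smul_eq_mul]
  -- the garbage term is nonnegative
  have hρpsd : ρ.PosSemidef := ptrA_psd Ψ
  have hz : 0 ≤ ρ.trace - (wQ d m * ρ).trace := by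
    have h1 : ((1 - wQ d m) * ρ * (1 - wQ d m)ᴴ).trace = ρ.trace - (wQ d m * ρ).trace := by
      rw [wR_herm, Matrix.trace_mul_cycle, wR_proj hm, Matrix.sub_mul, Matrix.one_mul,
        Matrix.trace_sub]
    rw [← h1]
    exact psd_trace_nonneg (hρpsd.mul_mul_conjTranspose_same _)
  have hs : 0 ≤ star c ⬝ᵥ (wSigma d hd').mulVec c := (wSigma_psd hd').dotProduct_mulVec_nonneg c
  have hT2 : 0 ≤ ((ρ.trace - (wQ d m * ρ).trace)
      * (star c ⬝ᵥ (wSigma d hd').mulVec c)).re := by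
    have h1 := Complex.le_def.mp hz
    have h2 := Complex.le_def.mp hs
    simp only [Complex.zero_re, Complex.zero_im] at h1 h2
    rw [Complex.mul_re, ← h1.2, ← h2.2]
    simp only [mul_zero, zero_mul, sub_zero]
    exact mul_nonneg h1.1 h2.1
  -- the main term
  have hT1eq : star c ⬝ᵥ (wA d m * ρ * (wA d m)ᴴ).mulVec c = star u ⬝ᵥ ρ.mulVec u := by
    rw [← Matrix.mulVec_mulVec, ← Matrix.mulVec_mulVec, Matrix.dotProduct_mulVec (star c)]
    congr 1
    rw [hu, Matrix.star_mulVec, Matrix.conjTranspose_conjTranspose]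
  have hT1 : star u ⬝ᵥ ρ.mulVec u = ((∑ a, Complex.normSq (g a) : ℝ) : ℂ) := by
    rw [hrho, ptrA_quadform Ψ u]
    push_cast
    refine Finset.sum_congr rfl fun a _ => ?_
    rw [hg]
    rw [Complex.star_def, Complex.mul_conj]
  -- compute g tA
  have hK : g tA = ((Real.sqrt m / Real.sqrt n : ℝ) : ℂ) := by
    have hNm : Ne + m = n := by omega
    have e2 : ∀ x, Ψ (tA, x) = ((Real.sqrt m / Real.sqrt n : ℝ) : ℂ)
        * ∑ j, c j * wVec d m j x := by
      intro x
      rw [hPsi]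
      simp only [Finset.sum_apply, Pi.smul_apply, smul_eq_mul]
      rw [Finset.mul_sum]
      refine Finset.sum_congr rfl fun j _ => ?_
      have := wSplit_top (Ne := Ne) hm j x
      have hcast : ((Ne : ℝ) + (m : ℝ)) = (n : ℝ) := by exact_mod_cast hNm
      rw [hcast] at this
      rw [htA]
      rw [this]
      ring
    have e1 : ∀ x, star (u x) = ∑ i, star (c i) * wVec d m i x := by
      intro x
      rw [hu]
      simp only [Matrix.mulVec, dotProduct, Matrix.conjTranspose_apply, star_sum, star_mul',
        star_star, Pi.star_apply, wA, Matrix.of_apply, star_wVec]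
      exact Finset.sum_congr rfl fun i _ => by rw [mul_comm]
    have hone : ∑ i, star (c i) * c i = 1 := by
      have h1 : ∀ i, star (c i) * c i = ((‖c i‖ ^ 2 : ℝ) : ℂ) := by
        intro i
        rw [Complex.star_def, mul_comm, Complex.mul_conj, Complex.normSq_eq_norm_sq]
      simp_rw [h1]
      rw [← Complex.ofReal_sum]
      rw [IsUnitVector] at hc
      rw [hc, Complex.ofReal_one]
    calc g tA = ∑ x, (∑ i, star (c i) * wVec d m i x)
        * (((Real.sqrt m / Real.sqrt n : ℝ) : ℂ) * ∑ j, c j * wVec d m j x) := by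
          rw [hg]
          exact Finset.sum_congr rfl fun x _ => by rw [e1, e2]
      _ = ((Real.sqrt m / Real.sqrt n : ℝ) : ℂ)
          * ∑ x, (∑ i, star (c i) * wVec d m i x) * (∑ j, c j * wVec d m j x) := by
          rw [Finset.mul_sum]
          exact Finset.sum_congr rfl fun x _ => by ring
      _ = ((Real.sqrt m / Real.sqrt n : ℝ) : ℂ) * ∑ i, star (c i) * c i := by
          rw [sum_mul_sum_orth hm]
      _ = ((Real.sqrt m / Real.sqrt n : ℝ) : ℂ) := by rw [hone, mul_one]
  -- lower bound the sum of squares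
  have hsum : (∑ a, Complex.normSq (g a) : ℝ) ≥ (m : ℝ) / n := by
    have h1 : Complex.normSq (g tA) ≤ ∑ a, Complex.normSq (g a) :=
      Finset.single_le_sum (f := fun a => Complex.normSq (g a))
        (fun _ _ => Complex.normSq_nonneg _) (Finset.mem_univ tA)
    have h2 : Complex.normSq (g tA) = (m : ℝ) / n := by
      rw [hK, Complex.normSq_ofReal]
      rw [div_mul_div_comm, Real.mul_self_sqrt (by positivity),
        Real.mul_self_sqrt (by positivity)]
    linarith
  have hfin : (m : ℝ) / n = 1 - (Ne : ℝ) / n := by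
    rw [hmdef, Nat.cast_sub hNen.le]
    have hn0 : (n : ℝ) ≠ 0 := by positivity
    field_simp
  rw [hsplit]
  rw [Complex.add_re, hT1eq, hT1, Complex.ofReal_re]
  have := hT2
  rw [ge_iff_le, ← hfin]
  linarith

end
end

section
/- Min-entropy SDP value of the erased W-code Choi state. Fix d ≥ 1, n ≥ 2 and 1 ≤ N_e < n, and set m := n − N_e. Model the physical space as (Fin N_e → Fin (d+1)) × (Fin m → Fin (d+1)), let E^{(n)} be the W-code encoder (a quantum channel from Fin d to the physical space), and let J := (1/d : ℂ) • ∑ i, ∑ j, (Matrix.stdBasisMatrix i j (1:ℂ)) ⊗ₖ ptrA (E^{(n)} (Matrix.stdBasisMatrix i j 1)) be the Choi state of erasure of the first N_e subsystems composed with the encoder, a matrix on (Fin d) × (Fin m → Fin (d+1)). Then Φ_{Fin d | (Fin m → Fin (d+1))}(J) = (N_e : ℝ)/(d · n) + (1 − (N_e : ℝ)/n) · d. -/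
open scoped Kronecker ComplexOrder
open Matrix MeasureTheory

noncomputable section

/-- The SDP `Φ_{A|B}(K) = 2^{-H_min(A|B)_K}` (primal form). -/
def Phi {A B : Type*} [Fintype A] [DecidableEq A] [Fintype B] [DecidableEq B]
    (K : Matrix (A × B) (A × B) ℂ) : ℝ :=
  sInf {r : ℝ | ∃ X : Matrix B B ℂ, X.PosSemidef ∧
    ((1 : Matrix A A ℂ) ⊗ₖ X - K).PosSemidef ∧ r = X.trace.re}

/-- Partial trace over the first factor, as a linear map (the erasure channel). -/
def ptrALin {A B : Type*} [Fintype A] [Fintype B] :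
    Matrix (A × B) (A × B) ℂ →ₗ[ℂ] Matrix B B ℂ where
  toFun M := Matrix.of fun b b' => ∑ a, M (a, b) (a, b')
  map_add' M N := by ext b b'; simp [Finset.sum_add_distrib]
  map_smul' c M := by ext b b'; simp [Finset.mul_sum]

/-- Choi state of a channel out of `Fin d`. -/
def choiState (d : ℕ) {P' : Type*} [Fintype P']
    (Φm : Matrix (Fin d) (Fin d) ℂ →ₗ[ℂ] Matrix P' P' ℂ) :
    Matrix (Fin d × P') (Fin d × P') ℂ :=
  (1 / d : ℂ) • ∑ i, ∑ j, (Matrix.single i j (1 : ℂ)) ⊗ₖ Φm (Matrix.single i j 1)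

/-- The isometry matrix of the W-code encoder on the split physical space. -/
def wIsometry (d Ne m : ℕ) :
    Matrix ((Fin Ne → Fin (d + 1)) × (Fin m → Fin (d + 1))) (Fin d) ℂ :=
  Matrix.of fun x i => wSplit d Ne m i x

/-- The W-code encoder `X ↦ V X Vᴴ` as a linear map. -/
def wEncoder (d Ne m : ℕ) :
    Matrix (Fin d) (Fin d) ℂ →ₗ[ℂ]
      Matrix ((Fin Ne → Fin (d + 1)) × (Fin m → Fin (d + 1)))
        ((Fin Ne → Fin (d + 1)) × (Fin m → Fin (d + 1))) ℂ where
  toFun X := wIsometry d Ne m * X * (wIsometry d Ne m)ᴴ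
  map_add' X Y := by simp [Matrix.mul_add, Matrix.add_mul]
  map_smul' c X := by simp [Matrix.mul_smul, Matrix.smul_mul]

namespace WAux

variable {d : ℕ}

def topF (d k : ℕ) : Fin k → Fin (d + 1) := fun _ => Fin.last d

def eV {k : ℕ} (i : Fin d) (a : Fin k) : Fin k → Fin (d + 1) := fun b =>
  if b = a then Fin.castSucc i else Fin.last d

lemma castSucc_ne_last (i : Fin d) : Fin.castSucc i ≠ Fin.last d :=
  (Fin.castSucc_lt_last i).ne

lemma eV_ne_top {k : ℕ} (i : Fin d) (a : Fin k) : eV i a ≠ topF d k := by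
  intro h
  have := congrFun h a
  simp [eV, topF] at this

lemma eV_eq_iff {k : ℕ} (i j : Fin d) (a a' : Fin k) :
    eV i a = eV j a' ↔ i = j ∧ a = a' := by
  constructor
  · intro h
    by_cases hab : a = a'
    · subst hab
      have := congrFun h a
      simp [eV] at this
      exact ⟨this, rfl⟩
    · have := congrFun h a
      simp [eV, hab] at this
  · rintro ⟨rfl, rfl⟩; rfl

lemma wVec_eq (d k : ℕ) (i : Fin d) (y : Fin k → Fin (d + 1)) :
    wVec d k i y = ((1 / Real.sqrt k : ℝ) : ℂ) * ∑ a, if y = eV i a then 1 else 0 := by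
  unfold wVec
  by_cases h : ∃ a : Fin k, y a = Fin.castSucc i ∧ ∀ b, b ≠ a → y b = Fin.last d
  · obtain ⟨a, h1, h2⟩ := h
    have hy : y = eV i a := by
      funext b
      by_cases hb : b = a
      · subst hb; simpa [eV] using h1
      · simpa [eV, hb] using h2 b hb
    rw [if_pos ⟨a, h1, h2⟩, hy]
    have : ∀ a' : Fin k, (if eV (k := k) i a = eV i a' then (1:ℂ) else 0)
        = if a' = a then 1 else 0 := by
      intro a'; simp [eV_eq_iff, eq_comm]
    rw [Finset.sum_congr rfl fun a' _ => this a']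
    simp
  · rw [if_neg h]
    symm
    rw [Finset.sum_eq_zero, mul_zero]
    intro a _
    rw [if_neg]
    rintro rfl
    exact h ⟨a, by simp [eV], fun b hb => by simp [eV, hb]⟩

lemma natAdd_ne_castAdd (Ne m : ℕ) (b : Fin m) (a : Fin Ne) :
    Fin.natAdd Ne b ≠ Fin.castAdd m a := by
  simp [Fin.ext_iff]; omega

lemma ite_and_one_zero (P Q : Prop) [Decidable P] [Decidable Q] :
    (if P ∧ Q then (1:ℂ) else 0) = (if P then 1 else 0) * (if Q then 1 else 0) := by
  by_cases hP : P <;> by_cases hQ : Q <;> simp [hP, hQ]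

lemma split_cond_left (d Ne m : ℕ) (i : Fin d) (x : Fin Ne → Fin (d+1)) (y : Fin m → Fin (d+1))
    (a : Fin Ne) :
    ((fun c => Sum.elim x y (finSumFinEquiv.symm c)) = eV i (finSumFinEquiv (Sum.inl a)))
      ↔ (x = eV i a ∧ y = topF d m) := by
  constructor
  · intro h
    constructor
    · funext b
      have hb := congrFun h (finSumFinEquiv (Sum.inl b))
      simpa [eV, topF, Fin.ext_iff] using hb
    · funext b
      have hb := congrFun h (finSumFinEquiv (Sum.inr b))
      simpa [eV, topF, natAdd_ne_castAdd Ne m b a] using hb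
  · rintro ⟨hx, hy⟩
    funext c
    obtain ⟨s, rfl⟩ : ∃ s, c = finSumFinEquiv s :=
      ⟨finSumFinEquiv.symm c, (finSumFinEquiv.apply_symm_apply c).symm⟩
    cases s with
    | inl b => simpa [eV, Fin.ext_iff] using congrFun hx b
    | inr b => simpa [eV, topF, natAdd_ne_castAdd Ne m b a] using congrFun hy b

lemma split_cond_right (d Ne m : ℕ) (i : Fin d) (x : Fin Ne → Fin (d+1)) (y : Fin m → Fin (d+1))
    (a : Fin m) :
    ((fun c => Sum.elim x y (finSumFinEquiv.symm c)) = eV i (finSumFinEquiv (Sum.inr a)))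
      ↔ (x = topF d Ne ∧ y = eV i a) := by
  constructor
  · intro h
    constructor
    · funext b
      have hb := congrFun h (finSumFinEquiv (Sum.inl b))
      simpa [eV, topF, (natAdd_ne_castAdd Ne m a b).symm] using hb
    · funext b
      have hb := congrFun h (finSumFinEquiv (Sum.inr b))
      simpa [eV, Fin.ext_iff] using hb
  · rintro ⟨hx, hy⟩
    funext c
    obtain ⟨s, rfl⟩ : ∃ s, c = finSumFinEquiv s :=
      ⟨finSumFinEquiv.symm c, (finSumFinEquiv.apply_symm_apply c).symm⟩
    cases s with
    | inl b => simpa [eV, topF, (natAdd_ne_castAdd Ne m a b).symm] using congrFun hx b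
    | inr b => simpa [eV, Fin.ext_iff] using congrFun hy b

lemma wSplit_eq (d Ne m : ℕ) (i : Fin d) (x : Fin Ne → Fin (d+1)) (y : Fin m → Fin (d+1)) :
    wSplit d Ne m i (x, y)
      = ((1 / Real.sqrt (Ne + m) : ℝ) : ℂ) *
        ((∑ a : Fin Ne, if x = eV i a then 1 else 0) * (if y = topF d m then 1 else 0)
          + (if x = topF d Ne then 1 else 0) * ∑ a : Fin m, if y = eV i a then 1 else 0) := by
  unfold wSplit
  rw [wVec_eq]
  congr 1
  · norm_cast
  rw [← finSumFinEquiv.sum_comp, Fintype.sum_sum_type]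
  congr 1
  · rw [Finset.sum_congr rfl fun a _ => by
      rw [if_congr (split_cond_left d Ne m i x y a) rfl rfl, ite_and_one_zero]]
    rw [← Finset.sum_mul]
  · rw [Finset.sum_congr rfl fun a _ => by
      rw [if_congr (split_cond_right d Ne m i x y a) rfl rfl, ite_and_one_zero]]
    rw [← Finset.mul_sum]
def tC (d m : ℕ) (y : Fin m → Fin (d+1)) : ℂ := if y = topF d m then 1 else 0

def gC {d : ℕ} {m : ℕ} (i : Fin d) (y : Fin m → Fin (d+1)) : ℂ :=
  ∑ a, if y = eV i a then 1 else 0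

lemma star_ite01 (P : Prop) [Decidable P] : star (if P then (1:ℂ) else 0) = if P then 1 else 0 := by
  by_cases h : P <;> simp [h]

lemma star_tC (d m : ℕ) (y : Fin m → Fin (d+1)) : star (tC d m y) = tC d m y := star_ite01 _

lemma star_gC {d m : ℕ} (i : Fin d) (y : Fin m → Fin (d+1)) : star (gC i y) = gC i y := by
  simp [gC, star_ite01]

lemma star_wSplit (d Ne m : ℕ) (i : Fin d)
    (x : (Fin Ne → Fin (d+1)) × (Fin m → Fin (d+1))) :
    star (wSplit d Ne m i x) = wSplit d Ne m i x := by
  simp [wSplit, wVec, apply_ite star, Complex.star_def, Complex.conj_ofReal]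

lemma sum_delta_mul_delta {α : Type*} [Fintype α] [DecidableEq α] (u v : α) :
    ∑ x : α, (if x = u then (1:ℂ) else 0) * (if x = v then 1 else 0)
      = if u = v then 1 else 0 := by
  simp only [ite_mul, one_mul, zero_mul, Finset.sum_ite_eq', Finset.mem_univ, if_true]

lemma sum_delta_sq {α : Type*} [Fintype α] [DecidableEq α] (u : α) :
    ∑ x : α, (if x = u then (1:ℂ) else 0) * (if x = u then 1 else 0) = 1 := by
  rw [sum_delta_mul_delta, if_pos rfl]

lemma sum_AB (d Ne : ℕ) (p q : Fin d) :
    ∑ x : Fin Ne → Fin (d+1),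
      (∑ a : Fin Ne, if x = eV p a then (1:ℂ) else 0) *
      (∑ a : Fin Ne, if x = eV q a then (1:ℂ) else 0)
    = if p = q then (Ne : ℂ) else 0 := by
  have step1 : ∀ x : Fin Ne → Fin (d+1),
      (∑ a : Fin Ne, if x = eV p a then (1:ℂ) else 0) *
      (∑ a : Fin Ne, if x = eV q a then (1:ℂ) else 0)
      = ∑ a : Fin Ne, ∑ a' : Fin Ne,
          (if x = eV p a then (1:ℂ) else 0) * (if x = eV q a' then 1 else 0) := by
    intro x; rw [Finset.sum_mul_sum]
  rw [Finset.sum_congr rfl fun x _ => step1 x, Finset.sum_comm]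
  rw [Finset.sum_congr rfl fun a _ => Finset.sum_comm]
  have step2 : ∀ a a' : Fin Ne,
      ∑ x : Fin Ne → Fin (d+1),
        (if x = eV p a then (1:ℂ) else 0) * (if x = eV q a' then 1 else 0)
      = (if p = q then (1:ℂ) else 0) * (if a = a' then 1 else 0) := by
    intro a a'
    rw [sum_delta_mul_delta, if_congr (eV_eq_iff p q a a') rfl rfl, ite_and_one_zero]
  rw [Finset.sum_congr rfl fun a _ => Finset.sum_congr rfl fun a' _ => step2 a a']
  by_cases h : p = q <;> simp [h, Finset.sum_ite_eq]

lemma sum_AX (d Ne : ℕ) (p : Fin d) :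
    ∑ x : Fin Ne → Fin (d+1),
      (∑ a : Fin Ne, if x = eV p a then (1:ℂ) else 0) * (if x = topF d Ne then 1 else 0)
    = 0 := by
  have step1 : ∀ x : Fin Ne → Fin (d+1),
      (∑ a : Fin Ne, if x = eV p a then (1:ℂ) else 0) * (if x = topF d Ne then 1 else 0)
      = ∑ a : Fin Ne, (if x = eV p a then (1:ℂ) else 0) * (if x = topF d Ne then 1 else 0) := by
    intro x; rw [Finset.sum_mul]
  rw [Finset.sum_congr rfl fun x _ => step1 x, Finset.sum_comm]
  rw [Finset.sum_congr rfl fun a _ => sum_delta_mul_delta (eV p a) (topF d Ne)]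
  simp [eV_ne_top]

lemma sum_XB (d Ne : ℕ) (q : Fin d) :
    ∑ x : Fin Ne → Fin (d+1),
      (if x = topF d Ne then (1:ℂ) else 0) * (∑ a : Fin Ne, if x = eV q a then (1:ℂ) else 0)
    = 0 := by
  have step1 : ∀ x : Fin Ne → Fin (d+1),
      (if x = topF d Ne then (1:ℂ) else 0) * (∑ a : Fin Ne, if x = eV q a then (1:ℂ) else 0)
      = ∑ a : Fin Ne, (if x = eV q a then (1:ℂ) else 0) * (if x = topF d Ne then 1 else 0) := by
    intro x; rw [Finset.mul_sum]; exact Finset.sum_congr rfl fun a _ => mul_comm _ _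
  rw [Finset.sum_congr rfl fun x _ => step1 x, Finset.sum_comm]
  rw [Finset.sum_congr rfl fun a _ => sum_delta_mul_delta (eV q a) (topF d Ne)]
  simp [eV_ne_top]

lemma sum_wSplit_mul (d Ne m : ℕ) (p q : Fin d)
    (y y' : Fin m → Fin (d+1)) :
    ∑ x : Fin Ne → Fin (d+1), wSplit d Ne m p (x, y) * wSplit d Ne m q (x, y')
      = (1/(Ne+m) : ℂ) *
        ((if p = q then (Ne:ℂ) else 0) * tC d m y * tC d m y' + gC p y * gC q y') := by
  have hc : ((1 / Real.sqrt (Ne + m) : ℝ) : ℂ) * ((1 / Real.sqrt (Ne + m) : ℝ) : ℂ)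
      = (1/(Ne+m) : ℂ) := by
    rw [← Complex.ofReal_mul]
    rw [show (1 / Real.sqrt (Ne + m)) * (1 / Real.sqrt (Ne + m)) = 1 / (Ne + m : ℝ) by
      rw [div_mul_div_comm, one_mul, Real.mul_self_sqrt (by positivity)]]
    push_cast
    ring
  calc ∑ x : Fin Ne → Fin (d+1), wSplit d Ne m p (x, y) * wSplit d Ne m q (x, y')
      = (1/(Ne+m) : ℂ) * ∑ x : Fin Ne → Fin (d+1),
          (((∑ a : Fin Ne, if x = eV p a then (1:ℂ) else 0) * tC d m y
            + (if x = topF d Ne then (1:ℂ) else 0) * gC p y) *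
           ((∑ a : Fin Ne, if x = eV q a then (1:ℂ) else 0) * tC d m y'
            + (if x = topF d Ne then (1:ℂ) else 0) * gC q y')) := by
        rw [Finset.mul_sum]
        refine Finset.sum_congr rfl fun x _ => ?_
        rw [wSplit_eq, wSplit_eq, mul_mul_mul_comm, hc]
        rfl
    _ = (1/(Ne+m) : ℂ) *
        ((if p = q then (Ne:ℂ) else 0) * tC d m y * tC d m y' + gC p y * gC q y') := by
        congr 1
        have expand : ∀ x : Fin Ne → Fin (d+1),
            (((∑ a : Fin Ne, if x = eV p a then (1:ℂ) else 0) * tC d m y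
            + (if x = topF d Ne then (1:ℂ) else 0) * gC p y) *
            ((∑ a : Fin Ne, if x = eV q a then (1:ℂ) else 0) * tC d m y'
            + (if x = topF d Ne then (1:ℂ) else 0) * gC q y'))
            = ((∑ a : Fin Ne, if x = eV p a then (1:ℂ) else 0) *
                (∑ a : Fin Ne, if x = eV q a then (1:ℂ) else 0)) * (tC d m y * tC d m y')
              + (((∑ a : Fin Ne, if x = eV p a then (1:ℂ) else 0) *
                  (if x = topF d Ne then (1:ℂ) else 0)) * (tC d m y * gC q y')
              + (((if x = topF d Ne then (1:ℂ) else 0) *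
                  (∑ a : Fin Ne, if x = eV q a then (1:ℂ) else 0)) * (gC p y * tC d m y')
              + ((if x = topF d Ne then (1:ℂ) else 0) * (if x = topF d Ne then (1:ℂ) else 0))
                  * (gC p y * gC q y'))) := by
          intro x; ring
        rw [Finset.sum_congr rfl fun x _ => expand x]
        rw [Finset.sum_add_distrib, Finset.sum_add_distrib, Finset.sum_add_distrib,
          ← Finset.sum_mul, ← Finset.sum_mul, ← Finset.sum_mul, ← Finset.sum_mul,
          sum_AB, sum_AX, sum_XB]
        have : ∑ x : Fin Ne → Fin (d+1),
            (if x = topF d Ne then (1:ℂ) else 0) * (if x = topF d Ne then (1:ℂ) else 0) = 1 :=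
          sum_delta_sq _
        rw [this]
        ring

lemma ptr_enc_apply (d Ne m : ℕ) (p q : Fin d) (y y' : Fin m → Fin (d+1)) :
    (ptrALin ∘ₗ wEncoder d Ne m) (single p q 1) y y'
      = ∑ x : Fin Ne → Fin (d+1),
          wSplit d Ne m p (x, y) * star (wSplit d Ne m q (x, y')) := by
  simp [ptrALin, wEncoder, wIsometry, Matrix.mul_apply, Matrix.single,
    conjTranspose_apply, Finset.sum_ite_eq, ite_and]

lemma choi_smul (d Ne m : ℕ) (p q : Fin d) (y y' : Fin m → Fin (d+1)) :
    choiState d (ptrALin ∘ₗ wEncoder d Ne m) (p, y) (q, y')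
      = (1/d : ℂ) * (ptrALin ∘ₗ wEncoder d Ne m) (single p q 1) y y' := by
  simp only [choiState, Matrix.smul_apply, Matrix.sum_apply, Matrix.kroneckerMap_apply,
    smul_eq_mul]
  congr 1
  rw [Finset.sum_eq_single p, Finset.sum_eq_single q]
  · simp [Matrix.single]
  · intro j _ hj; simp [Matrix.single, hj]
  · simp
  · intro i _ hi; simp [Matrix.single, hi]
  · simp

lemma choi_entry (d Ne m : ℕ) (p q : Fin d) (y y' : Fin m → Fin (d+1)) :
    choiState d (ptrALin ∘ₗ wEncoder d Ne m) (p, y) (q, y')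
      = (1/d : ℂ) * ((1/(Ne+m) : ℂ) *
          ((if p = q then (Ne:ℂ) else 0) * tC d m y * tC d m y' + gC p y * gC q y')) := by
  rw [choi_smul, ptr_enc_apply]
  rw [Finset.sum_congr rfl fun x _ => by rw [star_wSplit]]
  rw [sum_wSplit_mul]

lemma gC_top (d m : ℕ) (i : Fin d) : gC i (topF d m) = 0 := by
  refine Finset.sum_eq_zero fun a _ => ?_
  rw [if_neg]
  exact fun h => eV_ne_top i a h.symm

lemma sum_tt (d m : ℕ) : ∑ y : Fin m → Fin (d+1), tC d m y * tC d m y = 1 := by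
  simpa [tC] using sum_delta_sq (topF d m)

lemma sum_gg (d m : ℕ) (i j : Fin d) :
    ∑ y : Fin m → Fin (d+1), gC i y * gC j y = if i = j then (m:ℂ) else 0 := by
  simpa [gC] using sum_AB d m i j

lemma sum_gt (d m : ℕ) (i : Fin d) :
    ∑ y : Fin m → Fin (d+1), gC i y * tC d m y = 0 := by
  simpa [gC, tC] using sum_AX d m i

lemma sum_tg (d m : ℕ) (i : Fin d) :
    ∑ y : Fin m → Fin (d+1), tC d m y * gC i y = 0 := by
  rw [Finset.sum_congr rfl fun y _ => mul_comm (tC d m y) (gC i y)]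
  exact sum_gt d m i

lemma sum_delta_f {α : Type*} [Fintype α] [DecidableEq α] (u : α) (f : α → ℂ) :
    ∑ x : α, f x * (if x = u then 1 else 0) = f u := by
  simp [mul_ite]

end WAux
namespace WAux2

lemma normSq_sum_le {ι : Type*} (s : Finset ι) (f : ι → ℂ) :
    Complex.normSq (∑ i ∈ s, f i) ≤ s.card * ∑ i ∈ s, Complex.normSq (f i) := by
  have h1 : ∀ z : ℂ, Complex.normSq z = ‖z‖ ^ 2 := fun z => by
    rw [← Complex.sq_norm]
  rw [h1]
  calc ‖∑ i ∈ s, f i‖ ^ 2 ≤ (∑ i ∈ s, ‖f i‖) ^ 2 :=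
        pow_le_pow_left₀ (norm_nonneg _) (norm_sum_le s f) 2
    _ ≤ s.card * ∑ i ∈ s, ‖f i‖ ^ 2 := sq_sum_le_card_mul_sum_sq
    _ = s.card * ∑ i ∈ s, Complex.normSq (f i) := by
        congr 1; exact Finset.sum_congr rfl fun i _ => (h1 _).symm

variable {P ι : Type*} [Fintype P] [Fintype ι]

lemma star_sum_mul (w : P → ℂ) (hw : ∀ p, star (w p) = w p) (z : P → ℂ) :
    ((Complex.normSq (∑ p, w p * z p) : ℝ) : ℂ)
      = (∑ p, w p * star (z p)) * (∑ p, w p * z p) := by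
  rw [Complex.normSq_eq_conj_mul_self]
  congr 1
  rw [map_sum]
  exact Finset.sum_congr rfl fun p _ => by
    rw [show ((starRingEnd ℂ) (w p * z p)) = star (w p) * star (z p) from by
      simp [mul_comm]]
    rw [hw]

lemma qf_gramSum (c : ι → ℝ) (w : ι → P → ℂ) (hw : ∀ t p, star (w t p) = w t p)
    (z : P → ℂ) :
    star z ⬝ᵥ (Matrix.of fun p q => ∑ t, (c t : ℂ) * (w t p * w t q)) *ᵥ z
      = ∑ t, (c t : ℂ) * ((Complex.normSq (∑ p, w t p * z p) : ℝ) : ℂ) := by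
  calc star z ⬝ᵥ (Matrix.of fun p q => ∑ t, (c t : ℂ) * (w t p * w t q)) *ᵥ z
      = ∑ p, ∑ q, ∑ t, (c t : ℂ) * (w t p * w t q) * (star (z p) * z q) := by
        simp only [dotProduct, mulVec, Matrix.of_apply, Pi.star_apply]
        refine Finset.sum_congr rfl fun p _ => ?_
        rw [Finset.mul_sum]
        refine Finset.sum_congr rfl fun q _ => ?_
        rw [Finset.sum_mul, Finset.mul_sum]
        exact Finset.sum_congr rfl fun t _ => by ring
    _ = ∑ t, ∑ p, ∑ q, (c t : ℂ) * (w t p * w t q) * (star (z p) * z q) := by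
        rw [Finset.sum_congr rfl fun p (_ : p ∈ Finset.univ) => Finset.sum_comm]
        exact Finset.sum_comm
    _ = ∑ t, (c t : ℂ) * ((Complex.normSq (∑ p, w t p * z p) : ℝ) : ℂ) := by
        refine Finset.sum_congr rfl fun t _ => ?_
        rw [star_sum_mul (w t) (hw t), Finset.sum_mul_sum, Finset.mul_sum]
        refine Finset.sum_congr rfl fun p _ => ?_
        rw [Finset.mul_sum]
        exact Finset.sum_congr rfl fun q _ => by ring

lemma herm_gramSum (c : ι → ℝ) (w : ι → P → ℂ) (hw : ∀ t p, star (w t p) = w t p) :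
    (Matrix.of fun p q => ∑ t, (c t : ℂ) * (w t p * w t q)).IsHermitian := by
  ext p q
  simp only [Matrix.conjTranspose_apply, Matrix.of_apply, star_sum, star_mul']
  refine Finset.sum_congr rfl fun t _ => ?_
  rw [hw, hw, Complex.star_def, Complex.conj_ofReal]
  ring

lemma psd_gramSum (c : ι → ℝ) (hc : ∀ t, 0 ≤ c t) (w : ι → P → ℂ)
    (hw : ∀ t p, star (w t p) = w t p) :
    (Matrix.of fun p q => ∑ t, (c t : ℂ) * (w t p * w t q)).PosSemidef := by
  refine Matrix.PosSemidef.of_dotProduct_mulVec_nonneg (herm_gramSum c w hw) fun z => ?_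
  rw [qf_gramSum c w hw z]
  have : ∑ t, (c t : ℂ) * ((Complex.normSq (∑ p, w t p * z p) : ℝ) : ℂ)
      = ((∑ t, c t * Complex.normSq (∑ p, w t p * z p) : ℝ) : ℂ) := by
    push_cast; ring_nf
  rw [this]
  rw [Complex.zero_le_real]
  exact Finset.sum_nonneg fun t _ => mul_nonneg (hc t) (Complex.normSq_nonneg _)

lemma trace_gramSum (c : ι → ℝ) (w : ι → P → ℂ) (hw : ∀ t p, star (w t p) = w t p) :
    (Matrix.of fun p q => ∑ t, (c t : ℂ) * (w t p * w t q)).trace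
      = ∑ t, (c t : ℂ) * ∑ p, (w t p * w t p) := by
  rw [Matrix.trace]
  simp only [Matrix.diag_apply, Matrix.of_apply]
  rw [Finset.sum_comm]
  exact Finset.sum_congr rfl fun t _ => by rw [Finset.mul_sum]

/-- quadratic form of `1 ⊗ₖ X`. -/
lemma qf_kron_one {d : ℕ} (X : Matrix P P ℂ) (z : Fin d × P → ℂ) :
    star z ⬝ᵥ ((1 : Matrix (Fin d) (Fin d) ℂ) ⊗ₖ X) *ᵥ z
      = ∑ i : Fin d, (star fun y => z (i, y)) ⬝ᵥ X *ᵥ (fun y => z (i, y)) := by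
  simp only [dotProduct, mulVec, Matrix.kroneckerMap_apply, Pi.star_apply]
  rw [Fintype.sum_prod_type]
  refine Finset.sum_congr rfl fun i _ => ?_
  refine Finset.sum_congr rfl fun y _ => ?_
  congr 1
  rw [Fintype.sum_prod_type]
  rw [Finset.sum_eq_single i (fun j _ hj => by
      simp [Matrix.one_apply, Ne.symm hj]) (by simp)]
  exact Finset.sum_congr rfl fun y' _ => by simp [Matrix.one_apply]

/-- quadratic form of `Aᴴ * A`. -/
lemma qf_conjTranspose_mul_self {T : Type*} [Fintype T] (A : Matrix T P ℂ) (z : P → ℂ) :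
    star z ⬝ᵥ (Aᴴ * A) *ᵥ z = ∑ t, ((Complex.normSq (∑ p, A t p * z p) : ℝ) : ℂ) := by
  simp only [dotProduct, mulVec, Matrix.mul_apply, Matrix.conjTranspose_apply, Pi.star_apply]
  calc ∑ p, star (z p) * ∑ q, (∑ t, star (A t p) * A t q) * z q
      = ∑ p, ∑ q, ∑ t, (star (A t p) * star (z p)) * (A t q * z q) := by
        refine Finset.sum_congr rfl fun p _ => ?_
        rw [Finset.mul_sum]
        refine Finset.sum_congr rfl fun q _ => ?_
        rw [Finset.sum_mul, Finset.mul_sum]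
        exact Finset.sum_congr rfl fun t _ => by ring
    _ = ∑ t, ∑ p, ∑ q, (star (A t p) * star (z p)) * (A t q * z q) := by
        rw [Finset.sum_congr rfl fun p (_ : p ∈ Finset.univ) => Finset.sum_comm]
        exact Finset.sum_comm
    _ = ∑ t, ((Complex.normSq (∑ p, A t p * z p) : ℝ) : ℂ) := by
        refine Finset.sum_congr rfl fun t _ => ?_
        rw [Complex.normSq_eq_conj_mul_self, map_sum, Finset.sum_mul_sum]
        refine Finset.sum_congr rfl fun p _ => Finset.sum_congr rfl fun q _ => ?_
        simp only [_root_.map_mul, Complex.star_def]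

end WAux2

namespace WMain
open WAux WAux2

def wX (d m : ℕ) : Option (Fin d) → (Fin m → Fin (d+1)) → ℂ
  | none => fun y => tC d m y
  | some i => fun y => gC i y

def cX (d Ne m : ℕ) : Option (Fin d) → ℝ
  | none => (Ne : ℝ)/(d*(Ne+m))
  | some _ => 1/(Ne+m)

def X0 (d Ne m : ℕ) : Matrix (Fin m → Fin (d+1)) (Fin m → Fin (d+1)) ℂ :=
  Matrix.of fun y y' => ∑ t, (cX d Ne m t : ℂ) * (wX d m t y * wX d m t y')

def wJ (d m : ℕ) : Option (Fin d) → (Fin d × (Fin m → Fin (d+1))) → ℂ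
  | none => fun p => gC p.1 p.2
  | some i => fun p => (if p.1 = i then 1 else 0) * tC d m p.2

def cJ (d Ne m : ℕ) : Option (Fin d) → ℝ
  | none => 1/(d*(Ne+m))
  | some _ => (Ne : ℝ)/(d*(Ne+m))

def wD (d m : ℕ) : Option (Fin d × Fin d) → (Fin d × (Fin m → Fin (d+1))) → ℂ
  | none => fun p => gC p.1 p.2
  | some ik => fun p => (if p.1 = ik.1 then 1 else 0) * gC ik.2 p.2

def cD (d Ne m : ℕ) : Option (Fin d × Fin d) → ℝ
  | none => -(1/(d*(Ne+m)))
  | some _ => 1/(Ne+m)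

lemma star_wX (d m : ℕ) (t : Option (Fin d)) (y : Fin m → Fin (d+1)) :
    star (wX d m t y) = wX d m t y := by
  cases t <;> simp [wX, star_tC, star_gC, star_ite01]

lemma star_wJ (d m : ℕ) (t : Option (Fin d)) (p : Fin d × (Fin m → Fin (d+1))) :
    star (wJ d m t p) = wJ d m t p := by
  cases t with
  | none => simp [wJ, star_gC]
  | some k => by_cases h : p.1 = k <;> simp [wJ, h, star_tC]

lemma star_wD (d m : ℕ) (t : Option (Fin d × Fin d)) (p : Fin d × (Fin m → Fin (d+1))) :
    star (wD d m t p) = wD d m t p := by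
  cases t with
  | none => simp [wD, star_gC]
  | some ik => by_cases h : p.1 = ik.1 <;> simp [wD, h, star_gC]

lemma hJrep (d Ne m : ℕ) (hd : 0 < d) (hnm : 0 < Ne + m) :
    choiState d (ptrALin ∘ₗ wEncoder d Ne m)
      = Matrix.of fun p q => ∑ t, (cJ d Ne m t : ℂ) * (wJ d m t p * wJ d m t q) := by
  ext ⟨i, y⟩ ⟨j, y'⟩
  rw [choi_entry]
  rw [Matrix.of_apply, Fintype.sum_option]
  simp only [wJ, cJ]
  by_cases hij : i = j
  · subst hij
    rw [Finset.sum_eq_single i (fun k _ hk => by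
        have hik : ¬ (i = k) := fun h => hk h.symm
        simp [hik]) (by simp)]
    simp only [if_pos rfl]
    have hd' : (d:ℂ) ≠ 0 := Nat.cast_ne_zero.2 hd.ne'
    have hnm' : ((Ne:ℂ)+(m:ℂ)) ≠ 0 := by
      have := Nat.cast_ne_zero (R := ℂ).2 hnm.ne'
      push_cast at this
      exact this
    push_cast
    field_simp
    try ring
  · rw [Finset.sum_eq_zero (fun k _ => by
        by_cases hik : i = k
        · subst hik
          have hjk : ¬ (j = i) := fun h => hij h.symm
          simp [hjk]
        · simp [hik])]
    simp only [if_neg hij]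
    have hd' : (d:ℂ) ≠ 0 := Nat.cast_ne_zero.2 hd.ne'
    have hnm' : ((Ne:ℂ)+(m:ℂ)) ≠ 0 := by
      have := Nat.cast_ne_zero (R := ℂ).2 hnm.ne'
      push_cast at this
      exact this
    push_cast
    field_simp
    try ring

lemma hDrep (d Ne m : ℕ) (hd : 0 < d) (hnm : 0 < Ne + m) :
    (1 : Matrix (Fin d) (Fin d) ℂ) ⊗ₖ X0 d Ne m - choiState d (ptrALin ∘ₗ wEncoder d Ne m)
      = Matrix.of fun p q => ∑ t, (cD d Ne m t : ℂ) * (wD d m t p * wD d m t q) := by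
  have hd' : (d:ℂ) ≠ 0 := Nat.cast_ne_zero.2 hd.ne'
  have hnm' : ((Ne:ℂ)+(m:ℂ)) ≠ 0 := by
    have := Nat.cast_ne_zero (R := ℂ).2 hnm.ne'
    push_cast at this
    exact this
  ext ⟨i, y⟩ ⟨j, y'⟩
  rw [Matrix.sub_apply, Matrix.kroneckerMap_apply, choi_entry, Matrix.of_apply]
  conv_rhs => rw [Fintype.sum_option, Fintype.sum_prod_type]
  have hsum : ∑ k : Fin d, ∑ l : Fin d, ((cD d Ne m (some (k,l)) : ℝ):ℂ) *
        (wD d m (some (k,l)) (i,y) * wD d m (some (k,l)) (j,y'))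
      = (if i = j then 1 else 0) * ((1/(Ne+m) : ℝ):ℂ) * ∑ l, gC l y * gC l y' := by
    by_cases hij : i = j
    · subst hij
      rw [Finset.sum_eq_single i (fun k _ hk => Finset.sum_eq_zero fun l _ => by
          have hik : ¬ (i = k) := fun h => hk h.symm
          simp [wD, hik]) (by simp)]
      rw [if_pos rfl, one_mul, Finset.mul_sum]
      refine Finset.sum_congr rfl fun l _ => ?_
      simp [wD, cD]
    · rw [if_neg hij]
      rw [Finset.sum_eq_zero (fun k _ => Finset.sum_eq_zero fun l _ => by
          by_cases hik : i = k
          · subst hik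
            have hjk : ¬ (j = i) := fun h => hij h.symm
            simp [wD, hjk]
          · simp [wD, hik])]
      simp
  rw [hsum]
  simp only [wD, cD, X0, wX, cX, Matrix.of_apply, Matrix.one_apply, Fintype.sum_option]
  rw [show (∑ x : Fin d, ((1/(Ne+m) : ℝ):ℂ) * (gC x y * gC x y'))
      = ((1/(Ne+m) : ℝ):ℂ) * ∑ x : Fin d, gC x y * gC x y' from (Finset.mul_sum _ _ _).symm]
  by_cases hij : i = j
  · simp only [if_pos hij]
    push_cast
    field_simp
    ring
  · simp only [if_neg hij]
    push_cast
    field_simp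
    try ring


lemma X0_psd (d Ne m : ℕ) : (X0 d Ne m).PosSemidef := by
  refine psd_gramSum (cX d Ne m) (fun t => ?_) (wX d m) (star_wX d m)
  cases t <;> · simp only [cX]; positivity

lemma X0_herm (d Ne m : ℕ) : (X0 d Ne m).IsHermitian := (X0_psd d Ne m).1

lemma X0_trace (d Ne m : ℕ) :
    (X0 d Ne m).trace = (((Ne:ℝ)/(d*(Ne+m)) + d*m*(1/(Ne+m)) : ℝ) : ℂ) := by
  rw [X0, trace_gramSum _ _ (star_wX d m), Fintype.sum_option]
  simp only [wX, cX]
  rw [sum_tt]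
  rw [Finset.sum_congr rfl fun i (_ : i ∈ Finset.univ) => by
    rw [sum_gg d m i i, if_pos rfl]]
  rw [Finset.sum_const, Finset.card_univ, Fintype.card_fin]
  push_cast
  ring

lemma D_psd (d Ne m : ℕ) (hd : 0 < d) (hnm : 0 < Ne + m) :
    ((1 : Matrix (Fin d) (Fin d) ℂ) ⊗ₖ X0 d Ne m
      - choiState d (ptrALin ∘ₗ wEncoder d Ne m)).PosSemidef := by
  rw [hDrep d Ne m hd hnm]
  refine Matrix.PosSemidef.of_dotProduct_mulVec_nonneg (herm_gramSum _ _ (star_wD d m)) fun z => ?_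
  rw [qf_gramSum _ _ (star_wD d m) z]
  set S : Fin d × Fin d → ℂ := fun a => ∑ y, gC a.2 y * z (a.1, y) with hS
  have hsome : ∀ a : Fin d × Fin d,
      ∑ p : Fin d × (Fin m → Fin (d+1)), wD d m (some a) p * z p = S a := by
    intro a
    rw [Fintype.sum_prod_type]
    rw [Finset.sum_eq_single a.1 (fun p₁ _ hp => Finset.sum_eq_zero fun y _ => by
        simp [wD, hp]) (by simp)]
    simp [wD, hS]
  have hnone : ∑ p : Fin d × (Fin m → Fin (d+1)), wD d m none p * z p
      = ∑ i, S (i, i) := by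
    rw [Fintype.sum_prod_type]
    rfl
  rw [Fintype.sum_option, hnone]
  rw [Finset.sum_congr rfl fun a (_ : a ∈ (Finset.univ : Finset (Fin d × Fin d))) => by
    rw [hsome a]]
  simp only [cD]
  have hcast : (((-(1/(d*(Ne+m))) : ℝ)) : ℂ) * ((Complex.normSq (∑ i, S (i, i)) : ℝ) : ℂ)
        + ∑ a : Fin d × Fin d, ((1/(Ne+m) : ℝ) : ℂ) * ((Complex.normSq (S a) : ℝ) : ℂ)
      = (((-(1/(d*(Ne+m))) : ℝ)) * Complex.normSq (∑ i, S (i, i))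
        + ∑ a : Fin d × Fin d, (1/(Ne+m) : ℝ) * Complex.normSq (S a) : ℝ) := by
    push_cast
    ring
  rw [hcast, Complex.zero_le_real]
  have key : (1/(d*(Ne+m)) : ℝ) * Complex.normSq (∑ i, S (i, i))
      ≤ ∑ a : Fin d × Fin d, (1/(Ne+m) : ℝ) * Complex.normSq (S a) := by
    have h1 : Complex.normSq (∑ i, S (i, i)) ≤ d * ∑ i, Complex.normSq (S (i, i)) := by
      simpa using normSq_sum_le Finset.univ (fun i => S (i, i))
    have h2 : ∑ i, Complex.normSq (S (i, i))
        ≤ ∑ a : Fin d × Fin d, Complex.normSq (S a) := by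
      rw [Fintype.sum_prod_type]
      refine Finset.sum_le_sum fun i _ =>
        Finset.single_le_sum (fun k _ => Complex.normSq_nonneg (S (i, k))) (Finset.mem_univ i)
    have hd' : (0:ℝ) < d := by exact_mod_cast hd
    have hnm' : (0:ℝ) < (Ne:ℝ) + m := by
      have : (0:ℝ) < ((Ne + m : ℕ) : ℝ) := by exact_mod_cast hnm
      push_cast at this
      exact this
    calc (1/(d*(Ne+m)) : ℝ) * Complex.normSq (∑ i, S (i, i))
        ≤ (1/(d*(Ne+m)) : ℝ) * (d * ∑ i, Complex.normSq (S (i, i))) := by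
          refine mul_le_mul_of_nonneg_left h1 (by positivity)
      _ = (1/((Ne:ℝ)+m)) * ∑ i, Complex.normSq (S (i, i)) := by
          field_simp
      _ ≤ (1/((Ne:ℝ)+m)) * ∑ a : Fin d × Fin d, Complex.normSq (S a) := by
          refine mul_le_mul_of_nonneg_left h2 (by positivity)
      _ = ∑ a : Fin d × Fin d, (1/(Ne+m) : ℝ) * Complex.normSq (S a) := by
          rw [Finset.mul_sum]
  linarith [key]

lemma lower_bound (d Ne m : ℕ) (hd : 0 < d) (hNe : 0 < Ne) (hm : 0 < m)
    (X : Matrix (Fin m → Fin (d+1)) (Fin m → Fin (d+1)) ℂ) (hX : X.PosSemidef)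
    (hDps : ((1 : Matrix (Fin d) (Fin d) ℂ) ⊗ₖ X
      - choiState d (ptrALin ∘ₗ wEncoder d Ne m)).PosSemidef) :
    (Ne:ℝ)/(d*(Ne+m)) + (d:ℝ)*m*(1/((Ne:ℝ)+m)) ≤ X.trace.re := by
  have hnm : 0 < Ne + m := by omega
  have hdR : (0:ℝ) < d := by exact_mod_cast hd
  have hmR : (0:ℝ) < m := by exact_mod_cast hm
  have hnmR : (0:ℝ) < (Ne:ℝ) + m := by
    have : (0:ℝ) < ((Ne + m : ℕ) : ℝ) := by exact_mod_cast hnm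
    push_cast at this; exact this
  obtain ⟨A, rfl⟩ : ∃ A : Matrix (Fin m → Fin (d+1)) (Fin m → Fin (d+1)) ℂ, X = Aᴴ * A := by
    open scoped MatrixOrder in
    obtain ⟨B, hB⟩ := CStarAlgebra.nonneg_iff_eq_star_mul_self.mp hX.nonneg
    exact ⟨B, hB⟩
  set F : (Fin m → Fin (d+1)) → ℝ := fun y => ∑ t, Complex.normSq (A t y) with hF
  have hFnn : ∀ y, 0 ≤ F y := fun y => Finset.sum_nonneg fun t _ => Complex.normSq_nonneg _
  have hdiag : ∀ y, (Aᴴ * A) y y = ((F y : ℝ) : ℂ) := by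
    intro y
    rw [Matrix.mul_apply]
    rw [show ((F y : ℝ):ℂ) = ∑ t, ((Complex.normSq (A t y) : ℝ) : ℂ) from by
      rw [hF]; push_cast; rfl]
    exact Finset.sum_congr rfl fun t _ => by
      rw [Matrix.conjTranspose_apply, Complex.star_def, ← Complex.normSq_eq_conj_mul_self]
  have htr : (Aᴴ * A).trace.re = ∑ y, F y := by
    have : (Aᴴ * A).trace = ((∑ y, F y : ℝ) : ℂ) := by
      rw [Matrix.trace]
      push_cast
      exact Finset.sum_congr rfl fun y _ => hdiag y
    rw [this, Complex.ofReal_re]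
  -- test vector 1
  set i0 : Fin d := ⟨0, hd⟩
  set z1 : Fin d × (Fin m → Fin (d+1)) → ℂ := fun p => (if p.1 = i0 then 1 else 0) * tC d m p.2 with hz1
  have e1a : star z1 ⬝ᵥ ((1 : Matrix (Fin d) (Fin d) ℂ) ⊗ₖ (Aᴴ * A)) *ᵥ z1
      = ((F (topF d m) : ℝ) : ℂ) := by
    rw [qf_kron_one]
    rw [Finset.sum_congr rfl fun i (_ : i ∈ Finset.univ) =>
      qf_conjTranspose_mul_self A (fun y => z1 (i, y))]
    have hcol : ∀ (i : Fin d) (t : Fin m → Fin (d+1)), (∑ y, A t y * z1 (i, y))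
        = if i = i0 then A t (topF d m) else 0 := by
      intro i t
      by_cases h : i = i0
      · simp only [hz1, h, if_pos rfl, one_mul]
        simpa [tC] using sum_delta_f (topF d m) (fun y => A t y)
      · simp [hz1, h]
    rw [Finset.sum_congr rfl fun i (_ : i ∈ Finset.univ) =>
      Finset.sum_congr rfl fun t (_ : t ∈ Finset.univ) => by rw [hcol i t]]
    rw [Finset.sum_eq_single i0 (fun i _ hi => by simp [hi]) (by simp)]
    simp only [if_pos rfl]
    rw [hF]
    push_cast
    rfl
  have e1b : star z1 ⬝ᵥ (choiState d (ptrALin ∘ₗ wEncoder d Ne m)) *ᵥ z1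
      = (((Ne:ℝ)/(d*(Ne+m)) : ℝ) : ℂ) := by
    rw [hJrep d Ne m hd hnm, qf_gramSum _ _ (star_wJ d m) z1, Fintype.sum_option]
    have h0 : ∑ p : Fin d × (Fin m → Fin (d+1)), wJ d m none p * z1 p = 0 := by
      rw [Fintype.sum_prod_type]
      rw [Finset.sum_eq_single i0 (fun i _ hi => Finset.sum_eq_zero fun y _ => by
        simp [wJ, hz1, hi]) (by simp)]
      simpa [wJ, hz1] using sum_gt d m i0
    have hk : ∀ k : Fin d, ∑ p : Fin d × (Fin m → Fin (d+1)), wJ d m (some k) p * z1 p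
        = if i0 = k then 1 else 0 := by
      intro k
      rw [Fintype.sum_prod_type]
      by_cases h : i0 = k
      · subst h
        rw [Finset.sum_eq_single i0 (fun i _ hi => Finset.sum_eq_zero fun y _ => by
          simp [wJ, hz1, hi]) (by simp)]
        simpa [wJ, hz1] using sum_tt d m
      · rw [if_neg h]
        refine Finset.sum_eq_zero fun i _ => Finset.sum_eq_zero fun y _ => ?_
        by_cases hik : i = k
        · subst hik
          have : ¬ (i = i0) := fun hh => h hh.symm
          simp [wJ, hz1, this]
        · simp [wJ, hik]
    rw [h0]
    rw [Finset.sum_congr rfl fun k (_ : k ∈ Finset.univ) => by rw [hk k]]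
    simp only [cJ, map_zero]
    rw [Finset.sum_eq_single i0 (fun k _ hk' => by
      have : ¬ (i0 = k) := fun hh => hk' hh.symm
      simp [this]) (by simp)]
    simp
  have key1 : (Ne:ℝ)/(d*(Ne+m)) ≤ F (topF d m) := by
    have hq1 := hDps.dotProduct_mulVec_nonneg z1
    rw [Matrix.sub_mulVec, dotProduct_sub, e1a, e1b] at hq1
    rw [show ((F (topF d m) : ℝ) : ℂ) - (((Ne:ℝ)/(d*(Ne+m)) : ℝ) : ℂ)
        = ((F (topF d m) - (Ne:ℝ)/(d*(Ne+m)) : ℝ) : ℂ) from by push_cast; ring] at hq1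
    have := Complex.zero_le_real.mp hq1
    linarith
  -- test vector 2
  set z2 : Fin d × (Fin m → Fin (d+1)) → ℂ := fun p => gC p.1 p.2 with hz2
  have hcol2 : ∀ (t : Fin m → Fin (d+1)) (i : Fin d), (∑ y, A t y * gC i y) = ∑ a, A t (eV i a) := by
    intro t i
    simp only [gC, Finset.mul_sum]
    rw [Finset.sum_comm]
    exact Finset.sum_congr rfl fun a _ => sum_delta_f (eV i a) (fun y => A t y)
  have e2a : star z2 ⬝ᵥ ((1 : Matrix (Fin d) (Fin d) ℂ) ⊗ₖ (Aᴴ * A)) *ᵥ z2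
      = ((∑ i : Fin d, ∑ t : Fin m → Fin (d+1), Complex.normSq (∑ a, A t (eV i a)) : ℝ) : ℂ) := by
    rw [qf_kron_one]
    rw [Finset.sum_congr rfl fun i (_ : i ∈ Finset.univ) =>
      qf_conjTranspose_mul_self A (fun y => z2 (i, y))]
    rw [Finset.sum_congr rfl fun i (_ : i ∈ Finset.univ) =>
      Finset.sum_congr rfl fun t (_ : t ∈ Finset.univ) => by rw [show (∑ y, A t y * z2 (i, y)) = ∑ a, A t (eV i a) from hcol2 t i]]
    push_cast
    rfl
  have e2b : star z2 ⬝ᵥ (choiState d (ptrALin ∘ₗ wEncoder d Ne m)) *ᵥ z2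
      = ((1/(d*((Ne:ℝ)+m)) * (((d:ℝ)*m)*((d:ℝ)*m)) : ℝ) : ℂ) := by
    rw [hJrep d Ne m hd hnm, qf_gramSum _ _ (star_wJ d m) z2, Fintype.sum_option]
    have h0 : ∑ p : Fin d × (Fin m → Fin (d+1)), wJ d m none p * z2 p = (((d:ℝ)*m : ℝ) : ℂ) := by
      rw [Fintype.sum_prod_type]
      rw [Finset.sum_congr rfl fun i (_ : i ∈ Finset.univ) => by
        rw [show (∑ y, wJ d m none (i, y) * z2 (i, y)) = ∑ y, gC i y * gC i y from rfl,
          sum_gg d m i i, if_pos rfl]]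
      rw [Finset.sum_const, Finset.card_univ, Fintype.card_fin]
      push_cast
      ring
    have hk : ∀ k : Fin d, ∑ p : Fin d × (Fin m → Fin (d+1)), wJ d m (some k) p * z2 p = 0 := by
      intro k
      rw [Fintype.sum_prod_type]
      rw [Finset.sum_eq_single k (fun i _ hi => Finset.sum_eq_zero fun y _ => by
        simp [wJ, hz2, hi]) (by simp)]
      simpa [wJ, hz2] using sum_tg d m k
    rw [h0]
    rw [Finset.sum_congr rfl fun k (_ : k ∈ Finset.univ) => by rw [hk k]]
    simp only [cJ, Complex.normSq_ofReal, map_zero, Complex.normSq_zero,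
      Complex.ofReal_zero, mul_zero, Finset.sum_const_zero, add_zero]
    push_cast
    ring
  have key2 : (1/(d*((Ne:ℝ)+m))) * (((d:ℝ)*m)*((d:ℝ)*m))
      ≤ ∑ i : Fin d, ∑ t : Fin m → Fin (d+1), Complex.normSq (∑ a, A t (eV i a)) := by
    have hq2 := hDps.dotProduct_mulVec_nonneg z2
    rw [Matrix.sub_mulVec, dotProduct_sub, e2a, e2b] at hq2
    rw [show ((∑ i : Fin d, ∑ t : Fin m → Fin (d+1), Complex.normSq (∑ a, A t (eV i a)) : ℝ) : ℂ)
          - ((1/(d*((Ne:ℝ)+m)) * (((d:ℝ)*m)*((d:ℝ)*m)) : ℝ) : ℂ)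
        = (((∑ i : Fin d, ∑ t : Fin m → Fin (d+1), Complex.normSq (∑ a, A t (eV i a)))
            - 1/(d*((Ne:ℝ)+m)) * (((d:ℝ)*m)*((d:ℝ)*m)) : ℝ) : ℂ) from by push_cast; ring] at hq2
    have := Complex.zero_le_real.mp hq2
    linarith
  have cauchy : ∑ i : Fin d, ∑ t : Fin m → Fin (d+1), Complex.normSq (∑ a, A t (eV i a))
      ≤ m * ∑ i : Fin d, ∑ a : Fin m, F (eV i a) := by
    have h1 : ∀ (i : Fin d) (t : Fin m → Fin (d+1)), Complex.normSq (∑ a, A t (eV i a))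
        ≤ m * ∑ a, Complex.normSq (A t (eV i a)) := by
      intro i t
      simpa using normSq_sum_le Finset.univ (fun a => A t (eV i a))
    calc ∑ i : Fin d, ∑ t : Fin m → Fin (d+1), Complex.normSq (∑ a, A t (eV i a))
        ≤ ∑ i : Fin d, ∑ t : Fin m → Fin (d+1), (m : ℝ) * ∑ a, Complex.normSq (A t (eV i a)) :=
          Finset.sum_le_sum fun i _ => Finset.sum_le_sum fun t _ => h1 i t
      _ = m * ∑ i : Fin d, ∑ a : Fin m, F (eV i a) := by
          rw [Finset.mul_sum]
          refine Finset.sum_congr rfl fun i _ => ?_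
          rw [← Finset.mul_sum, Finset.sum_comm]
          try rfl
  have key3 : (d:ℝ)*m*(1/((Ne:ℝ)+m)) ≤ ∑ i : Fin d, ∑ a : Fin m, F (eV i a) := by
    have := le_trans key2 cauchy
    have hmain : ((d:ℝ)*m*(1/((Ne:ℝ)+m))) * m
        ≤ (∑ i : Fin d, ∑ a : Fin m, F (eV i a)) * m := by
      calc ((d:ℝ)*m*(1/((Ne:ℝ)+m))) * m
          = (1/(d*((Ne:ℝ)+m))) * (((d:ℝ)*m)*((d:ℝ)*m)) := by field_simp
        _ ≤ (m * ∑ i : Fin d, ∑ a : Fin m, F (eV i a)) := this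
        _ = (∑ i : Fin d, ∑ a : Fin m, F (eV i a)) * m := by ring
    exact le_of_mul_le_mul_right hmain hmR
  -- subset sum
  have hsub : F (topF d m) + ∑ p : Fin d × Fin m, F (eV p.1 p.2) ≤ ∑ y, F y := by
    classical
    set s : Finset (Fin m → Fin (d+1)) := insert (topF d m)
      (Finset.image (fun p : Fin d × Fin m => eV p.1 p.2) Finset.univ) with hs
    have hnotmem : topF d m ∉ Finset.image (fun p : Fin d × Fin m => eV p.1 p.2) Finset.univ := by
      rw [Finset.mem_image]
      rintro ⟨p, _, hp⟩
      exact eV_ne_top p.1 p.2 hp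
    have hinj : ∀ p ∈ (Finset.univ : Finset (Fin d × Fin m)), ∀ q ∈ (Finset.univ : Finset (Fin d × Fin m)),
        eV p.1 p.2 = eV q.1 q.2 → p = q := by
      rintro ⟨i, a⟩ _ ⟨j, b⟩ _ h
      obtain ⟨h1, h2⟩ := (eV_eq_iff i j a b).mp h
      exact Prod.ext h1 h2
    have hsum_s : ∑ y ∈ s, F y
        = F (topF d m) + ∑ p : Fin d × Fin m, F (eV p.1 p.2) := by
      rw [hs, Finset.sum_insert hnotmem, Finset.sum_image hinj]
    rw [← hsum_s]
    exact Finset.sum_le_sum_of_subset_of_nonneg (Finset.subset_univ s)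
      (fun y _ _ => hFnn y)
  have hps : ∑ p : Fin d × Fin m, F (eV p.1 p.2) = ∑ i : Fin d, ∑ a : Fin m, F (eV i a) :=
    Fintype.sum_prod_type _
  rw [htr]
  rw [hps] at hsub
  linarith


theorem phi_val (d Ne m : ℕ) (hd : 0 < d) (hNe : 0 < Ne) (hm : 0 < m) :
    Phi (choiState d (ptrALin ∘ₗ wEncoder d Ne m))
      = (Ne:ℝ)/(d*(Ne+m)) + (d:ℝ)*m*(1/((Ne:ℝ)+m)) := by
  have hnm : 0 < Ne + m := by omega
  have hmem : (Ne:ℝ)/(d*(Ne+m)) + (d:ℝ)*m*(1/((Ne:ℝ)+m))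
      ∈ {r : ℝ | ∃ X : Matrix (Fin m → Fin (d+1)) (Fin m → Fin (d+1)) ℂ,
        X.PosSemidef ∧ ((1 : Matrix (Fin d) (Fin d) ℂ) ⊗ₖ X
          - choiState d (ptrALin ∘ₗ wEncoder d Ne m)).PosSemidef ∧ r = X.trace.re} := by
    refine ⟨X0 d Ne m, X0_psd d Ne m, D_psd d Ne m hd hnm, ?_⟩
    rw [X0_trace, Complex.ofReal_re]
  have hlb : ∀ r ∈ {r : ℝ | ∃ X : Matrix (Fin m → Fin (d+1)) (Fin m → Fin (d+1)) ℂ,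
        X.PosSemidef ∧ ((1 : Matrix (Fin d) (Fin d) ℂ) ⊗ₖ X
          - choiState d (ptrALin ∘ₗ wEncoder d Ne m)).PosSemidef ∧ r = X.trace.re},
      (Ne:ℝ)/(d*(Ne+m)) + (d:ℝ)*m*(1/((Ne:ℝ)+m)) ≤ r := by
    rintro r ⟨X, hX, hDps, rfl⟩
    exact lower_bound d Ne m hd hNe hm X hX hDps
  unfold Phi
  exact le_antisymm
    (csInf_le ⟨_, hlb⟩ hmem)
    (le_csInf ⟨_, hmem⟩ hlb)

end WMain


/-- **Min-entropy SDP value of the erased W-code Choi state.**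
For the W-code on `n` subsystems with the first `N_e` erased,
`Φ(J) = N_e/(d·n) + (1 - N_e/n)·d`. -/
theorem wcode_choi_phi_value
    (d n Ne : ℕ) (hd : 1 ≤ d) (hn : 2 ≤ n) (hNe : 1 ≤ Ne) (hNen : Ne < n) :
    Phi (choiState d (ptrALin ∘ₗ wEncoder d Ne (n - Ne))) =
      (Ne : ℝ) / (d * n) + (1 - (Ne : ℝ) / n) * d := by
  rw [WMain.phi_val d Ne (n - Ne) hd hNe (by omega)]
  have hsub : ((n - Ne : ℕ) : ℝ) = (n:ℝ) - Ne := Nat.cast_sub hNen.le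
  have hne : ((Ne:ℝ) + ((n - Ne : ℕ):ℝ)) = (n:ℝ) := by rw [hsub]; ring
  rw [hne, hsub]
  have hn0 : (n:ℝ) ≠ 0 := by
    have : (0:ℝ) < n := by exact_mod_cast (by omega : 0 < n)
    exact this.ne'
  field_simp

end
end
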